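/- arXiv:2405.09540 — 6 statements merged into one kernel-verified Lean document; each statement's English description precedes it below -/
import Mathlib

section
/- Let N ≥ 1, let Q be a real symmetric N×N matrix, q, d ∈ ℝ^N, γ > 0, b, c ∈ ℝ, and assume D := b/γ + ((c/γ − 1)/2)² ≥ 0. Set s₁ := (c/γ−1)/2 − √D, A := [[Q, qᵗ],[q, γ]], v := (d,c), and w := v − 2s₁(q,γ) = (d − 2s₁q, c − 2s₁γ). Then for every α ∈ ℝ, every u ∈ C²(ℝ^{N+1}_+) and every (x,y) ∈ ℝ^{N+1}_+, one has y^{α} Tr(A D²(y^{−s₁}u))(x,y) + y^{α−1} v·∇(y^{−s₁}u)(x,y) − b y^{α−2} (y^{−s₁}u)(x,y) = y^{−s₁} ( y^{α} Tr(A D²u)(x,y) + y^{α−1} w·∇u(x,y) ); moreover the last component of w satisfies c − 2s₁γ = γ(1 + 2√D). -/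
open MeasureTheory Real

noncomputable section

/-- Points of `ℝ^{N+1} = ℝ^N × ℝ`; we write `z = (x, y)` with `x : Fin N → ℝ` and `y : ℝ`. -/
abbrev Pt (N : ℕ) := (Fin N → ℝ) × ℝ

/-- Directional (partial) derivative of `u` at `z` in the direction `v`. -/
def pd {N : ℕ} (v : Pt N) (u : Pt N → ℝ) (z : Pt N) : ℝ := fderiv ℝ u z v

/-- The unit vector in the `i`-th `x`-direction. -/
def ex {N : ℕ} (i : Fin N) : Pt N := (Pi.single i 1, 0)

/-- The unit vector in the `y`-direction. -/
def ey {N : ℕ} : Pt N := (0, 1)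

/-- The `i`-th coordinate direction of `ℝ^{N+1}`, `(x_1, …, x_N, y)`. -/
def bvec {N : ℕ} (i : Fin (N + 1)) : Pt N :=
  if h : (i : ℕ) < N then ex ⟨i, h⟩ else ey

/-- The block matrix `[[Q, qᵗ], [q, γ]]`. -/
def blockA {N : ℕ} (Q : Matrix (Fin N) (Fin N) ℝ) (q : Fin N → ℝ) (γ : ℝ) :
    Matrix (Fin (N + 1)) (Fin (N + 1)) ℝ := Matrix.of fun i j =>
  if hi : (i : ℕ) < N then
    if hj : (j : ℕ) < N then Q ⟨i, hi⟩ ⟨j, hj⟩ else q ⟨i, hi⟩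
  else if hj : (j : ℕ) < N then q ⟨j, hj⟩ else γ

/-- `Tr (A D² u)` at the point `z`: `∑_{i,j} a_{ij} ∂²u/∂z_i∂z_j`. -/
def trHess {N : ℕ} (A : Matrix (Fin (N + 1)) (Fin (N + 1)) ℝ) (u : Pt N → ℝ) (z : Pt N) : ℝ :=
  ∑ i, ∑ j, A i j * pd (bvec i) (pd (bvec j) u) z

/-- The norm of `L^p_m(ℝ^{N+1}_+) = L^p(ℝ^{N+1}_+ ; y^m dx dy)`. -/
def LpmNorm (N : ℕ) (p m : ℝ) (f : Pt N → ℝ) : ℝ :=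
  (∫ z in {z : Pt N | 0 < z.2}, |f z| ^ p * z.2 ^ m) ^ (1 / p)


lemma hasFDerivAt_rpow_snd {N : ℕ} (s : ℝ) {z : Pt N} (hz : 0 < z.2) :
    HasFDerivAt (fun w : Pt N => w.2 ^ s)
      ((s * z.2 ^ (s - 1)) • (ContinuousLinearMap.snd ℝ (Fin N → ℝ) ℝ)) z := by
  have h := Real.hasDerivAt_rpow_const (x := z.2) (p := s) (Or.inl hz.ne')
  exact h.comp_hasFDerivAt z (hasFDerivAt_snd)

lemma pd_mul {N : ℕ} (s : ℝ) {u : Pt N → ℝ} {z : Pt N} (hz : 0 < z.2)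
    (hu : DifferentiableAt ℝ u z) (v : Pt N) :
    pd v (fun w : Pt N => w.2 ^ s * u w) z
      = z.2 ^ s * pd v u z + v.2 * (s * z.2 ^ (s - 1)) * u z := by
  have h : HasFDerivAt (fun w : Pt N => w.2 ^ s * u w) _ z :=
    (hasFDerivAt_rpow_snd s hz).mul hu.hasFDerivAt
  unfold pd
  rw [h.fderiv]
  simp
  ring

lemma pd_pd_mul {N : ℕ} (s : ℝ) {u : Pt N → ℝ} {z : Pt N} (hz : 0 < z.2)
    (hu : ContDiffOn ℝ 2 u {z : Pt N | 0 < z.2}) (v v' : Pt N) :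
    pd v (pd v' (fun w : Pt N => w.2 ^ s * u w)) z
      = z.2 ^ s * pd v (pd v' u) z
        + (s * z.2 ^ (s - 1)) * (v'.2 * pd v u z + v.2 * pd v' u z)
        + v.2 * v'.2 * (s * (s - 1) * z.2 ^ (s - 2)) * u z := by
  have hUo : IsOpen {z : Pt N | 0 < z.2} := isOpen_lt continuous_const continuous_snd
  have hzU : z ∈ {z : Pt N | 0 < z.2} := hz
  have hdiff : ∀ w ∈ {z : Pt N | 0 < z.2}, DifferentiableAt ℝ u w := fun w hw =>
    (hu.differentiableOn (by norm_num)).differentiableAt (hUo.mem_nhds hw)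
  have hud : DifferentiableAt ℝ u z := hdiff z hzU
  have hc : ContDiffAt ℝ 2 u z := hu.contDiffAt (hUo.mem_nhds hzU)
  have h2 : ContDiffAt ℝ 1 (fderiv ℝ u) z := hc.fderiv_right (by norm_num)
  have hd2 : DifferentiableAt ℝ (fderiv ℝ u) z := h2.differentiableAt (by norm_num)
  have hh : DifferentiableAt ℝ (fun w => fderiv ℝ u w v') z :=
    hd2.clm_apply (differentiableAt_const v')
  have hev : (pd v' (fun w : Pt N => w.2 ^ s * u w))
      =ᶠ[nhds z] (fun w => w.2 ^ s * (fderiv ℝ u w v')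
        + v'.2 * s * (w.2 ^ (s - 1) * u w)) := by
    filter_upwards [hUo.mem_nhds hzU] with w hw
    rw [pd_mul s hw (hdiff w hw) v']
    show w.2 ^ s * fderiv ℝ u w v' + _ = _
    ring
  have hG : HasFDerivAt (fun w : Pt N => w.2 ^ s * (fderiv ℝ u w v')
        + v'.2 * s * (w.2 ^ (s - 1) * u w)) _ z :=
    ((hasFDerivAt_rpow_snd s hz).mul hh.hasFDerivAt).add
      (((hasFDerivAt_rpow_snd (s-1) hz).mul hud.hasFDerivAt).const_mul (v'.2 * s))
  have e1 : pd v (pd v' (fun w : Pt N => w.2 ^ s * u w)) z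
      = fderiv ℝ (fun w : Pt N => w.2 ^ s * (fderiv ℝ u w v')
          + v'.2 * s * (w.2 ^ (s - 1) * u w)) z v := by
    show fderiv ℝ (pd v' fun w : Pt N => w.2 ^ s * u w) z v = _
    rw [hev.fderiv_eq]
  rw [e1, hG.fderiv]
  have h21 : s - 1 - 1 = s - 2 := by ring
  have hpe : (pd v' u) = fun w => (fderiv ℝ u w) v' := rfl
  simp only [pd, hpe]
  simp [h21]
  ring

lemma trHess_expand {N : ℕ} (Q : Matrix (Fin N) (Fin N) ℝ) (q : Fin N → ℝ) (γ : ℝ)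
    (v : Pt N → ℝ) (z : Pt N) :
    trHess (blockA Q q γ) v z
      = (∑ i, ∑ j, Q i j * pd (ex i) (pd (ex j) v) z)
        + (∑ i, q i * pd (ex i) (pd ey v) z)
        + (∑ j, q j * pd ey (pd (ex j) v) z)
        + γ * pd ey (pd ey v) z := by
  unfold trHess
  rw [Fin.sum_univ_castSucc]
  simp only [Fin.sum_univ_castSucc (n := N)]
  simp [blockA, bvec, Fin.is_lt]
  rw [Finset.sum_add_distrib]
  ring

/-- The multiplication `u ↦ y^{−s₁} u` intertwines
`y^α Tr(A D²·) + y^{α-1} v·∇· − b y^{α-2}·` with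
`y^α Tr(A D²·) + y^{α-1} w·∇·`, where `w = v − 2s₁(q, γ)`;
moreover `c − 2s₁γ = γ(1 + 2√D)`. -/
theorem statement4 (N : ℕ) (hN : 1 ≤ N)
    (Q : Matrix (Fin N) (Fin N) ℝ) (hQ : Q.IsSymm) (q d : Fin N → ℝ) (γ : ℝ) (hγ : 0 < γ)
    (b c : ℝ) (D s₁ : ℝ) (hD : D = b / γ + ((c / γ - 1) / 2) ^ 2) (hDpos : 0 ≤ D)
    (hs₁ : s₁ = (c / γ - 1) / 2 - Real.sqrt D) :
    (∀ α : ℝ, ∀ u : Pt N → ℝ, ContDiffOn ℝ 2 u {z : Pt N | 0 < z.2} →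
      ∀ z : Pt N, 0 < z.2 →
        z.2 ^ α * trHess (blockA Q q γ) (fun w : Pt N => w.2 ^ (-s₁) * u w) z
          + z.2 ^ (α - 1) *
              ((∑ i, d i * pd (ex i) (fun w : Pt N => w.2 ^ (-s₁) * u w) z)
                + c * pd ey (fun w : Pt N => w.2 ^ (-s₁) * u w) z)
          - b * z.2 ^ (α - 2) * (z.2 ^ (-s₁) * u z)
        = z.2 ^ (-s₁) *
            (z.2 ^ α * trHess (blockA Q q γ) u z
              + z.2 ^ (α - 1) *
                  ((∑ i, (d i - 2 * s₁ * q i) * pd (ex i) u z)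
                    + (c - 2 * s₁ * γ) * pd ey u z))) ∧
    c - 2 * s₁ * γ = γ * (1 + 2 * Real.sqrt D) := by
  have hγ' : γ ≠ 0 := hγ.ne'
  have hsq : Real.sqrt D ^ 2 = D := Real.sq_sqrt hDpos
  have hlast : c - 2 * s₁ * γ = γ * (1 + 2 * Real.sqrt D) := by
    subst hs₁
    field_simp
    ring
  have hquad : γ * s₁ ^ 2 + γ * s₁ - c * s₁ - b = 0 := by
    have hR : Real.sqrt D ^ 2 = D := Real.sq_sqrt hDpos
    set R := Real.sqrt D with hRdef
    rw [hD] at hR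
    rw [hs₁]
    field_simp at hR ⊢
    nlinarith [hR]
  refine ⟨?_, hlast⟩
  intro α u hu z hz
  have hUo : IsOpen {z : Pt N | 0 < z.2} := isOpen_lt continuous_const continuous_snd
  have hud : DifferentiableAt ℝ u z :=
    (hu.differentiableOn (by norm_num)).differentiableAt (hUo.mem_nhds hz)
  have hex2 : ∀ i : Fin N, (ex (N := N) i).2 = 0 := fun i => rfl
  have hey2 : (ey (N := N)).2 = 1 := rfl
  -- first derivatives
  have hx : ∀ i : Fin N, pd (ex i) (fun w : Pt N => w.2 ^ (-s₁) * u w) z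
      = z.2 ^ (-s₁) * pd (ex i) u z := by
    intro i
    rw [pd_mul (-s₁) hz hud (ex i), hex2]
    ring
  have hy : pd ey (fun w : Pt N => w.2 ^ (-s₁) * u w) z
      = z.2 ^ (-s₁) * pd ey u z + (-s₁) * z.2 ^ (-s₁ - 1) * u z := by
    rw [pd_mul (-s₁) hz hud ey, hey2]
    ring
  -- second derivatives
  have hxx : ∀ i j : Fin N, pd (ex i) (pd (ex j) (fun w : Pt N => w.2 ^ (-s₁) * u w)) z
      = z.2 ^ (-s₁) * pd (ex i) (pd (ex j) u) z := by
    intro i j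
    rw [pd_pd_mul (-s₁) hz hu (ex i) (ex j), hex2, hex2]
    ring
  have hxy : ∀ i : Fin N, pd (ex i) (pd ey (fun w : Pt N => w.2 ^ (-s₁) * u w)) z
      = z.2 ^ (-s₁) * pd (ex i) (pd ey u) z
        + (-s₁) * z.2 ^ (-s₁ - 1) * pd (ex i) u z := by
    intro i
    rw [pd_pd_mul (-s₁) hz hu (ex i) ey, hex2, hey2]
    ring
  have hyx : ∀ j : Fin N, pd ey (pd (ex j) (fun w : Pt N => w.2 ^ (-s₁) * u w)) z
      = z.2 ^ (-s₁) * pd ey (pd (ex j) u) z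
        + (-s₁) * z.2 ^ (-s₁ - 1) * pd (ex j) u z := by
    intro j
    rw [pd_pd_mul (-s₁) hz hu ey (ex j), hex2, hey2]
    ring
  have hyy : pd ey (pd ey (fun w : Pt N => w.2 ^ (-s₁) * u w)) z
      = z.2 ^ (-s₁) * pd ey (pd ey u) z
        + (-s₁) * z.2 ^ (-s₁ - 1) * (2 * pd ey u z)
        + (s₁ * (s₁ + 1)) * z.2 ^ (-s₁ - 2) * u z := by
    rw [pd_pd_mul (-s₁) hz hu ey ey, hey2]
    ring
  rw [trHess_expand, trHess_expand]
  have e1 : (∑ i, ∑ j, Q i j * pd (ex i) (pd (ex j)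
        (fun w : Pt N => w.2 ^ (-s₁) * u w)) z)
      = z.2 ^ (-s₁) * ∑ i, ∑ j, Q i j * pd (ex i) (pd (ex j) u) z := by
    rw [Finset.mul_sum]
    refine Finset.sum_congr rfl fun i _ => ?_
    rw [Finset.mul_sum]
    refine Finset.sum_congr rfl fun j _ => ?_
    rw [hxx i j]; ring
  have e2 : (∑ i, q i * pd (ex i) (pd ey (fun w : Pt N => w.2 ^ (-s₁) * u w)) z)
      = z.2 ^ (-s₁) * (∑ i, q i * pd (ex i) (pd ey u) z)
        + (-s₁) * z.2 ^ (-s₁ - 1) * (∑ i, q i * pd (ex i) u z) := by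
    rw [Finset.mul_sum, Finset.mul_sum, ← Finset.sum_add_distrib]
    refine Finset.sum_congr rfl fun i _ => ?_
    rw [hxy i]; ring
  have e3 : (∑ j, q j * pd ey (pd (ex j) (fun w : Pt N => w.2 ^ (-s₁) * u w)) z)
      = z.2 ^ (-s₁) * (∑ j, q j * pd ey (pd (ex j) u) z)
        + (-s₁) * z.2 ^ (-s₁ - 1) * (∑ j, q j * pd (ex j) u z) := by
    rw [Finset.mul_sum, Finset.mul_sum, ← Finset.sum_add_distrib]
    refine Finset.sum_congr rfl fun j _ => ?_
    rw [hyx j]; ring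
  have e4 : (∑ i, d i * pd (ex i) (fun w : Pt N => w.2 ^ (-s₁) * u w) z)
      = z.2 ^ (-s₁) * ∑ i, d i * pd (ex i) u z := by
    rw [Finset.mul_sum]
    refine Finset.sum_congr rfl fun i _ => ?_
    rw [hx i]; ring
  have e5 : (∑ i, (d i - 2 * s₁ * q i) * pd (ex i) u z)
      = (∑ i, d i * pd (ex i) u z) - 2 * s₁ * (∑ i, q i * pd (ex i) u z) := by
    rw [Finset.mul_sum, ← Finset.sum_sub_distrib]
    refine Finset.sum_congr rfl fun i _ => ?_
    ring
  rw [e1, e2, e3, e4, e5, hy, hyy]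
  have hp1 : z.2 ^ (α - 1) = z.2 ^ α * z.2 ^ (-1 : ℝ) := by
    rw [show α - 1 = α + (-1) by ring, Real.rpow_add hz]
  have hp2 : z.2 ^ (α - 2) = z.2 ^ α * z.2 ^ (-1 : ℝ) * z.2 ^ (-1 : ℝ) := by
    rw [show α - 2 = α + (-1) + (-1) by ring, Real.rpow_add hz, Real.rpow_add hz]
  have hp3 : z.2 ^ (-s₁ - 1) = z.2 ^ (-s₁) * z.2 ^ (-1 : ℝ) := by
    rw [show -s₁ - 1 = -s₁ + (-1) by ring, Real.rpow_add hz]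
  have hp4 : z.2 ^ (-s₁ - 2) = z.2 ^ (-s₁) * z.2 ^ (-1 : ℝ) * z.2 ^ (-1 : ℝ) := by
    rw [show -s₁ - 2 = -s₁ + (-1) + (-1) by ring, Real.rpow_add hz, Real.rpow_add hz]
  rw [hp1, hp2, hp3, hp4]
  linear_combination (z.2 ^ α * z.2 ^ (-1 : ℝ) * z.2 ^ (-1 : ℝ) * z.2 ^ (-s₁) * u z) * hquad
end
end

section
/- Let N ≥ 1, let Q be a real symmetric N×N matrix, q, d ∈ ℝ^N, γ, c, b ∈ ℝ, α₁, α₂ ∈ ℝ, and let k, β ∈ ℝ with β ≠ −1. Let ℒ be the operator with parameters (Q, q, γ, d, c, b, α₁, α₂), and let ℒ̃ be the operator of the same form with parameters α̃₁ := α₁/(β+1), α̃₂ := (α₂+2β)/(β+1), the same Q, and q̃ := (β+1)q, γ̃ := (β+1)²γ, d̃ := 2kq + d, c̃ := (β+1)(c + (2k+β)γ), b̃ := b − k(c + (k−1)γ). Then for every u ∈ C²(ℝ^{N+1}_+) and every point of ℝ^{N+1}_+ one has ℒ(T_{k,β}u) = T_{k,β}(ℒ̃u). -/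
open MeasureTheory Real

noncomputable section

/-- The map `T_{k,β} u (x, y) = |β+1|^{1/p} y^k u(x, y^{β+1})`. -/
def Tkb (N : ℕ) (p k β : ℝ) (u : Pt N → ℝ) : Pt N → ℝ := fun z =>
  |β + 1| ^ (1 / p) * z.2 ^ k * u (z.1, z.2 ^ (β + 1))

/-- The degenerate operator
`ℒu = y^{α₁} Tr(Q D²_x u) + 2 y^{(α₁+α₂)/2} q·∇_x(∂_y u) + γ y^{α₂} ∂²_{yy} u
      + y^{(α₁+α₂)/2−1} d·∇_x u + c y^{α₂−1} ∂_y u − b y^{α₂−2} u`. -/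
def opL {N : ℕ} (Q : Matrix (Fin N) (Fin N) ℝ) (q d : Fin N → ℝ) (γ c b α₁ α₂ : ℝ)
    (u : Pt N → ℝ) (z : Pt N) : ℝ :=
  z.2 ^ α₁ * (∑ i, ∑ j, Q i j * pd (ex i) (pd (ex j) u) z)
    + 2 * z.2 ^ ((α₁ + α₂) / 2) * (∑ i, q i * pd (ex i) (pd ey u) z)
    + γ * z.2 ^ α₂ * pd ey (pd ey u) z
    + z.2 ^ ((α₁ + α₂) / 2 - 1) * (∑ i, d i * pd (ex i) u z)
    + c * z.2 ^ (α₂ - 1) * pd ey u z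
    - b * z.2 ^ (α₂ - 2) * u z

namespace Aux
variable {N : ℕ}

def U (N : ℕ) : Set (Pt N) := {z | 0 < z.2}

lemma isOpen_U : IsOpen (U N) := isOpen_lt continuous_const continuous_snd

def φm (β : ℝ) (z : Pt N) : Pt N := (z.1, z.2 ^ (β + 1))

lemma φm_mem {β : ℝ} {z : Pt N} (hz : 0 < z.2) : φm β z ∈ U N :=
  Real.rpow_pos_of_pos hz _

def Dφ (β : ℝ) (z : Pt N) : Pt N →L[ℝ] Pt N :=
  (ContinuousLinearMap.fst ℝ (Fin N → ℝ) ℝ).prod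
    (((β + 1) * z.2 ^ β) • ContinuousLinearMap.snd ℝ (Fin N → ℝ) ℝ)

lemma hasFDerivAt_φm {β : ℝ} {z : Pt N} (hz : 0 < z.2) :
    HasFDerivAt (φm β) (Dφ β z) z := by
  have h1 : HasDerivAt (fun y : ℝ => y ^ (β + 1)) ((β + 1) * z.2 ^ β) z.2 := by
    have := Real.hasDerivAt_rpow_const (x := z.2) (p := β + 1) (Or.inl hz.ne')
    simpa using this
  exact HasFDerivAt.prodMk hasFDerivAt_fst (h1.comp_hasFDerivAt z hasFDerivAt_snd)

lemma shape_hasFDerivAt (a m β : ℝ) (g : Pt N → ℝ) {z : Pt N}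
    (hg : DifferentiableAt ℝ g (φm β z)) (hz : 0 < z.2) :
    HasFDerivAt (fun w : Pt N => a * w.2 ^ m * g (φm β w))
      ((a * z.2 ^ m) • ((fderiv ℝ g (φm β z)).comp (Dφ β z))
        + g (φm β z) • (a • ((m * z.2 ^ (m - 1)) • ContinuousLinearMap.snd ℝ (Fin N → ℝ) ℝ))) z := by
  have h1 : HasDerivAt (fun y : ℝ => y ^ m) (m * z.2 ^ (m - 1)) z.2 :=
    Real.hasDerivAt_rpow_const (Or.inl hz.ne')
  have h1' : HasFDerivAt (fun w : Pt N => w.2 ^ m)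
      ((m * z.2 ^ (m - 1)) • ContinuousLinearMap.snd ℝ (Fin N → ℝ) ℝ) z :=
    h1.comp_hasFDerivAt z hasFDerivAt_snd
  have h2 : HasFDerivAt (fun w : Pt N => g (φm β w))
      ((fderiv ℝ g (φm β z)).comp (Dφ β z)) z :=
    (hg.hasFDerivAt).comp z (hasFDerivAt_φm hz)
  exact (h1'.const_mul a).mul h2

lemma pd_shape (a m β : ℝ) (g : Pt N → ℝ) {z : Pt N} (v : Pt N)
    (hg : DifferentiableAt ℝ g (φm β z)) (hz : 0 < z.2) :
    pd v (fun w : Pt N => a * w.2 ^ m * g (φm β w)) z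
      = a * z.2 ^ m * (fderiv ℝ g (φm β z)) (v.1, (β + 1) * z.2 ^ β * v.2)
        + g (φm β z) * (a * (m * z.2 ^ (m - 1) * v.2)) := by
  rw [pd, (shape_hasFDerivAt a m β g hg hz).fderiv]
  simp [Dφ, ContinuousLinearMap.add_apply, ContinuousLinearMap.smul_apply,
    ContinuousLinearMap.comp_apply, ContinuousLinearMap.prod_apply, smul_eq_mul]


lemma pd_shape_ex (a m β : ℝ) (g : Pt N → ℝ) {z : Pt N} (i : Fin N)
    (hg : DifferentiableAt ℝ g (φm β z)) (hz : 0 < z.2) :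
    pd (ex i) (fun w : Pt N => a * w.2 ^ m * g (φm β w)) z
      = a * z.2 ^ m * pd (ex i) g (φm β z) := by
  rw [pd_shape a m β g (ex i) hg hz]
  simp [ex, pd]

lemma pd_shape_ey (a m β : ℝ) (g : Pt N → ℝ) {z : Pt N}
    (hg : DifferentiableAt ℝ g (φm β z)) (hz : 0 < z.2) :
    pd ey (fun w : Pt N => a * w.2 ^ m * g (φm β w)) z
      = a * (β + 1) * (z.2 ^ m * z.2 ^ β) * pd ey g (φm β z)
        + a * m * (z.2 ^ m / z.2) * g (φm β z) := by
  rw [pd_shape a m β g ey hg hz]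
  have hv : ((0 : Fin N → ℝ), (β + 1) * z.2 ^ β * (1:ℝ))
      = ((β + 1) * z.2 ^ β) • ((0 : Fin N → ℝ), (1:ℝ)) := by
    simp
  have : (fderiv ℝ g (φm β z)) ((0 : Fin N → ℝ), (β + 1) * z.2 ^ β * (1:ℝ))
      = ((β + 1) * z.2 ^ β) * pd ey g (φm β z) := by
    rw [hv, ContinuousLinearMap.map_smul, smul_eq_mul, pd, ey]
  rw [show (ey : Pt N).1 = (0 : Fin N → ℝ) from rfl, show (ey : Pt N).2 = (1:ℝ) from rfl, this,
    Real.rpow_sub hz, Real.rpow_one]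
  ring

lemma pd_add {f g : Pt N → ℝ} {z : Pt N} (v : Pt N)
    (hf : DifferentiableAt ℝ f z) (hg : DifferentiableAt ℝ g z) :
    pd v (fun w => f w + g w) z = pd v f z + pd v g z := by
  simp only [pd, fderiv_fun_add hf hg]; rfl

lemma pd_congr {f g : Pt N → ℝ} {z : Pt N} (v : Pt N)
    (h : ∀ w ∈ U N, f w = g w) (hz : z ∈ U N) : pd v f z = pd v g z := by
  have : f =ᶠ[nhds z] g := Filter.eventuallyEq_of_mem (isOpen_U.mem_nhds hz) h
  rw [pd, pd, this.fderiv_eq]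

lemma diffAt {g : Pt N → ℝ} (hg : ContDiffOn ℝ 1 g (U N)) {z : Pt N} (hz : z ∈ U N) :
    DifferentiableAt ℝ g z :=
  (hg.differentiableOn one_ne_zero).differentiableAt (isOpen_U.mem_nhds hz)

lemma pd_contDiffOn {u : Pt N → ℝ} (hu : ContDiffOn ℝ 2 u (U N)) (v : Pt N) :
    ContDiffOn ℝ 1 (pd v u) (U N) := by
  have h : ContDiffOn ℝ 1 (fderiv ℝ u) (U N) :=
    hu.fderiv_of_isOpen isOpen_U (by norm_num)
  exact h.clm_apply contDiffOn_const

end Aux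

/-- Conjugation of the degenerate operator by `T_{k,β}`:
`ℒ(T_{k,β} u) = T_{k,β}(ℒ̃ u)` where `ℒ̃` has parameters
`α̃₁ = α₁/(β+1)`, `α̃₂ = (α₂+2β)/(β+1)`, `q̃ = (β+1)q`, `γ̃ = (β+1)²γ`,
`d̃ = 2kq + d`, `c̃ = (β+1)(c + (2k+β)γ)`, `b̃ = b − k(c + (k−1)γ)`. -/


theorem statement7 (N : ℕ) (hN : 1 ≤ N)
    (Q : Matrix (Fin N) (Fin N) ℝ) (hQ : Q.IsSymm) (q d : Fin N → ℝ)
    (γ c b α₁ α₂ k β p : ℝ) (hβ : β ≠ -1) (hp1 : 1 ≤ p)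
    (u : Pt N → ℝ) (hu : ContDiffOn ℝ 2 u {z : Pt N | 0 < z.2}) :
    ∀ z : Pt N, 0 < z.2 →
      opL Q q d γ c b α₁ α₂ (Tkb N p k β u) z
        = Tkb N p k β
            (opL Q (fun i => (β + 1) * q i) (fun i => 2 * k * q i + d i)
              ((β + 1) ^ 2 * γ) ((β + 1) * (c + (2 * k + β) * γ))
              (b - k * (c + (k - 1) * γ))
              (α₁ / (β + 1)) ((α₂ + 2 * β) / (β + 1)) u) z := by
  intro z hz
  have hβ1 : β + 1 ≠ 0 := fun h => hβ (by linarith)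
  have hzU : z ∈ Aux.U N := hz
  have hφzU : Aux.φm β z ∈ Aux.U N := Aux.φm_mem hz
  have huU : ContDiffOn ℝ 2 u (Aux.U N) := hu
  have hu1 : ContDiffOn ℝ 1 u (Aux.U N) := huU.of_le (by norm_num)
  have hud : ∀ w ∈ Aux.U N, DifferentiableAt ℝ u w := fun w hw => Aux.diffAt hu1 hw
  have hpdd : ∀ (v : Pt N), ∀ w ∈ Aux.U N, DifferentiableAt ℝ (pd v u) w :=
    fun v w hw => Aux.diffAt (Aux.pd_contDiffOn huU v) hw
  set C := |β + 1| ^ (1 / p) with hCdef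
  -- first derivatives of Tkb u on U
  have hTex : ∀ j : Fin N, ∀ w ∈ Aux.U N, pd (ex j) (Tkb N p k β u) w
      = C * w.2 ^ k * pd (ex j) u (Aux.φm β w) := by
    intro j w hw
    exact Aux.pd_shape_ex C k β u j (hud _ (Aux.φm_mem hw)) hw
  have hTey : ∀ w ∈ Aux.U N, pd ey (Tkb N p k β u) w
      = (C * (β + 1)) * w.2 ^ (k + β) * pd ey u (Aux.φm β w)
        + (C * k) * w.2 ^ (k - 1) * u (Aux.φm β w) := by
    intro w hw
    have h := Aux.pd_shape_ey C k β u (hud _ (Aux.φm_mem hw)) hw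
    refine h.trans ?_
    rw [Real.rpow_add hw, Real.rpow_sub hw, Real.rpow_one]
    try ring
  -- second derivatives at z
  have hxx : ∀ i j : Fin N, pd (ex i) (pd (ex j) (Tkb N p k β u)) z
      = C * z.2 ^ k * pd (ex i) (pd (ex j) u) (Aux.φm β z) := by
    intro i j
    rw [Aux.pd_congr (ex i) (hTex j) hzU]
    exact Aux.pd_shape_ex C k β (pd (ex j) u) i (hpdd _ _ hφzU) hz
  have dA : DifferentiableAt ℝ
      (fun w : Pt N => (C * (β + 1)) * w.2 ^ (k + β) * pd ey u (Aux.φm β w)) z :=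
    (Aux.shape_hasFDerivAt (C * (β + 1)) (k + β) β (pd ey u) (hpdd ey _ hφzU) hz).differentiableAt
  have dB : DifferentiableAt ℝ
      (fun w : Pt N => (C * k) * w.2 ^ (k - 1) * u (Aux.φm β w)) z :=
    (Aux.shape_hasFDerivAt (C * k) (k - 1) β u (hud _ hφzU) hz).differentiableAt
  have hxy : ∀ i : Fin N, pd (ex i) (pd ey (Tkb N p k β u)) z
      = (C * (β + 1)) * z.2 ^ (k + β) * pd (ex i) (pd ey u) (Aux.φm β z)
        + (C * k) * z.2 ^ (k - 1) * pd (ex i) u (Aux.φm β z) := by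
    intro i
    rw [Aux.pd_congr (ex i) hTey hzU, Aux.pd_add (ex i) dA dB,
      Aux.pd_shape_ex (C * (β + 1)) (k + β) β (pd ey u) i (hpdd ey _ hφzU) hz,
      Aux.pd_shape_ex (C * k) (k - 1) β u i (hud _ hφzU) hz]
  have hyy : pd ey (pd ey (Tkb N p k β u)) z
      = ((C * (β + 1)) * (β + 1) * (z.2 ^ (k + β) * z.2 ^ β) * pd ey (pd ey u) (Aux.φm β z)
          + (C * (β + 1)) * (k + β) * (z.2 ^ (k + β) / z.2) * pd ey u (Aux.φm β z))
        + ((C * k) * (β + 1) * (z.2 ^ (k - 1) * z.2 ^ β) * pd ey u (Aux.φm β z)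
          + (C * k) * (k - 1) * (z.2 ^ (k - 1) / z.2) * u (Aux.φm β z)) := by
    rw [Aux.pd_congr ey hTey hzU, Aux.pd_add ey dA dB,
      Aux.pd_shape_ey (C * (β + 1)) (k + β) β (pd ey u) (hpdd ey _ hφzU) hz,
      Aux.pd_shape_ey (C * k) (k - 1) β u (hud _ hφzU) hz]
  have hTexz : ∀ j : Fin N, pd (ex j) (Tkb N p k β u) z
      = C * z.2 ^ k * pd (ex j) u (Aux.φm β z) := fun j => hTex j z hzU
  have hTeyz := hTey z hzU
  have hT0 : Tkb N p k β u z = C * z.2 ^ k * u (Aux.φm β z) := rfl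
  have hR : Tkb N p k β
        (opL Q (fun i => (β + 1) * q i) (fun i => 2 * k * q i + d i)
          ((β + 1) ^ 2 * γ) ((β + 1) * (c + (2 * k + β) * γ))
          (b - k * (c + (k - 1) * γ))
          (α₁ / (β + 1)) ((α₂ + 2 * β) / (β + 1)) u) z
      = C * z.2 ^ k * (opL Q (fun i => (β + 1) * q i) (fun i => 2 * k * q i + d i)
          ((β + 1) ^ 2 * γ) ((β + 1) * (c + (2 * k + β) * γ))
          (b - k * (c + (k - 1) * γ))
          (α₁ / (β + 1)) ((α₂ + 2 * β) / (β + 1)) u) (Aux.φm β z) := rfl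
  rw [hR]
  have hsnd : (Aux.φm β z).2 = z.2 ^ (β + 1) := rfl
  simp only [opL, hsnd, hxx, hxy, hyy, hTexz, hTeyz, hT0]
  have hA : ∑ x : Fin N, ∑ y : Fin N, Q x y * (C * z.2 ^ k * pd (ex x) (pd (ex y) u) (Aux.φm β z))
      = C * z.2 ^ k * ∑ i, ∑ j, Q i j * pd (ex i) (pd (ex j) u) (Aux.φm β z) := by
    rw [Finset.mul_sum]
    refine Finset.sum_congr rfl fun i _ => ?_
    rw [Finset.mul_sum]
    exact Finset.sum_congr rfl fun j _ => by ring
  have hB : ∑ x : Fin N, q x * (C * (β + 1) * z.2 ^ (k + β) * pd (ex x) (pd ey u) (Aux.φm β z)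
        + C * k * z.2 ^ (k - 1) * pd (ex x) u (Aux.φm β z))
      = C * (β + 1) * z.2 ^ (k + β) * (∑ i, q i * pd (ex i) (pd ey u) (Aux.φm β z))
        + C * k * z.2 ^ (k - 1) * (∑ i, q i * pd (ex i) u (Aux.φm β z)) := by
    rw [Finset.mul_sum, Finset.mul_sum, ← Finset.sum_add_distrib]
    exact Finset.sum_congr rfl fun i _ => by ring
  have hD : ∑ x : Fin N, d x * (C * z.2 ^ k * pd (ex x) u (Aux.φm β z))
      = C * z.2 ^ k * ∑ i, d i * pd (ex i) u (Aux.φm β z) := by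
    rw [Finset.mul_sum]
    exact Finset.sum_congr rfl fun i _ => by ring
  have hQt : ∑ x : Fin N, (β + 1) * q x * pd (ex x) (pd ey u) (Aux.φm β z)
      = (β + 1) * ∑ i, q i * pd (ex i) (pd ey u) (Aux.φm β z) := by
    rw [Finset.mul_sum]
    exact Finset.sum_congr rfl fun i _ => by ring
  have hDt : ∑ x : Fin N, (2 * k * q x + d x) * pd (ex x) u (Aux.φm β z)
      = 2 * k * (∑ i, q i * pd (ex i) u (Aux.φm β z)) + ∑ i, d i * pd (ex i) u (Aux.φm β z) := by
    rw [Finset.mul_sum, ← Finset.sum_add_distrib]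
    exact Finset.sum_congr rfl fun i _ => by ring
  rw [hA, hB, hD, hQt, hDt]
  have e1 : (β + 1) * (α₁ / (β + 1)) = α₁ := by field_simp
  have e2 : (β + 1) * ((α₁ / (β + 1) + (α₂ + 2 * β) / (β + 1)) / 2) = (α₁ + α₂) / 2 + β := by
    field_simp; ring
  have e3 : (β + 1) * ((α₂ + 2 * β) / (β + 1)) = α₂ + β + β := by field_simp; ring
  have e4 : (β + 1) * ((α₁ / (β + 1) + (α₂ + 2 * β) / (β + 1)) / 2 - 1) = (α₁ + α₂) / 2 - 1 := by
    field_simp; ring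
  have e5 : (β + 1) * ((α₂ + 2 * β) / (β + 1) - 1) = α₂ - 1 + β := by field_simp; ring
  have e6 : (β + 1) * ((α₂ + 2 * β) / (β + 1) - 2) = α₂ - 2 := by field_simp; ring
  simp only [← Real.rpow_mul hz.le, e1, e2, e3, e4, e5, e6]
  have h2 : z.2 ^ (2 : ℝ) = z.2 * z.2 := by
    rw [show (2 : ℝ) = ((2 : ℕ) : ℝ) by norm_num, Real.rpow_natCast]; ring
  simp only [Real.rpow_add hz, Real.rpow_sub hz, Real.rpow_one, h2]
  field_simp
  ring
end
end

section
/- Let N ≥ 1, let Q be a real symmetric N×N matrix, q, d ∈ ℝ^N, γ, c, b ∈ ℝ, α₁, α₂ ∈ ℝ with α₂ − α₁ ≠ 2, and k ∈ ℝ. Set β := (α₁−α₂)/2 and α̃ := 2α₁/(α₁−α₂+2). Let ℒ be the operator with parameters (Q, q, γ, d, c, b, α₁, α₂), and set q̃ := (β+1)q, γ̃ := (β+1)²γ, Ã := [[Q, q̃ᵗ],[q̃, γ̃]], ṽ := (2kq + d, (β+1)(c+(2k+β)γ)), b̃ := b − k(c+(k−1)γ). Then for every u ∈ C²(ℝ^{N+1}_+)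 and every point of ℝ^{N+1}_+ one has ℒ(T_{k,β}u) = T_{k,β}( y^{α̃} Tr(Ã D²u) + y^{α̃−1} ṽ·∇u − b̃ y^{α̃−2} u ), where D²u and ∇u denote the full Hessian and gradient in (x,y). -/
open MeasureTheory Real

noncomputable section

section auxST8

lemma keyHasFDerivAt {N : ℕ} {s : ℝ} {z : Pt N} (hy : 0 < z.2) {g : Pt N → ℝ}
    (hg : DifferentiableAt ℝ g (z.1, z.2 ^ s)) (a m : ℝ) :
    HasFDerivAt (fun w : Pt N => a * (w.2 ^ m * g (w.1, w.2 ^ s)))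
      (a • ((z.2 ^ m) • ((fderiv ℝ g (z.1, z.2 ^ s)).comp
            ((ContinuousLinearMap.fst ℝ (Fin N → ℝ) ℝ).prod
              ((s * z.2 ^ (s - 1)) • ContinuousLinearMap.snd ℝ (Fin N → ℝ) ℝ)))
          + (g (z.1, z.2 ^ s)) • ((m * z.2 ^ (m - 1)) • ContinuousLinearMap.snd ℝ (Fin N → ℝ) ℝ))) z := by
  have hy0 : z.2 ≠ 0 := ne_of_gt hy
  have hphi : HasFDerivAt (fun w : Pt N => ((w.1, w.2 ^ s) : Pt N))
      ((ContinuousLinearMap.fst ℝ (Fin N → ℝ) ℝ).prod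
        ((s * z.2 ^ (s - 1)) • ContinuousLinearMap.snd ℝ (Fin N → ℝ) ℝ)) z :=
    HasFDerivAt.prodMk (hasFDerivAt_fst) (hasFDerivAt_snd.rpow_const (Or.inl hy0))
  have hpow : HasFDerivAt (fun w : Pt N => w.2 ^ m)
      ((m * z.2 ^ (m - 1)) • ContinuousLinearMap.snd ℝ (Fin N → ℝ) ℝ) z :=
    hasFDerivAt_snd.rpow_const (Or.inl hy0)
  exact (hpow.mul (hg.hasFDerivAt.comp z hphi)).const_mul a

lemma key_diffAt {N : ℕ} {s : ℝ} {z : Pt N} (hy : 0 < z.2) {g : Pt N → ℝ}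
    (hg : DifferentiableAt ℝ g (z.1, z.2 ^ s)) (a m : ℝ) :
    DifferentiableAt ℝ (fun w : Pt N => a * (w.2 ^ m * g (w.1, w.2 ^ s))) z :=
  (keyHasFDerivAt hy hg a m).differentiableAt

lemma key_pdx {N : ℕ} {s : ℝ} {z : Pt N} (hy : 0 < z.2) {g : Pt N → ℝ}
    (hg : DifferentiableAt ℝ g (z.1, z.2 ^ s)) (a m : ℝ) (i : Fin N) :
    pd (ex i) (fun w : Pt N => a * (w.2 ^ m * g (w.1, w.2 ^ s))) z
      = a * (z.2 ^ m * pd (ex i) g (z.1, z.2 ^ s)) := by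
  have h := (keyHasFDerivAt hy hg a m).fderiv
  simp only [pd, h, ex, ContinuousLinearMap.smul_apply, ContinuousLinearMap.add_apply,
    ContinuousLinearMap.coe_comp', Function.comp_apply, ContinuousLinearMap.prod_apply,
    ContinuousLinearMap.coe_fst', ContinuousLinearMap.coe_snd', mul_zero, smul_eq_mul]
  ring

lemma key_pdy {N : ℕ} {s : ℝ} {z : Pt N} (hy : 0 < z.2) {g : Pt N → ℝ}
    (hg : DifferentiableAt ℝ g (z.1, z.2 ^ s)) (a m : ℝ) :
    pd ey (fun w : Pt N => a * (w.2 ^ m * g (w.1, w.2 ^ s))) z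
      = a * (m * z.2 ^ (m - 1) * g (z.1, z.2 ^ s)
          + s * z.2 ^ (s - 1) * (z.2 ^ m * pd ey g (z.1, z.2 ^ s))) := by
  have h := (keyHasFDerivAt hy hg a m).fderiv
  simp only [pd, h, ey, ContinuousLinearMap.smul_apply, ContinuousLinearMap.add_apply,
    ContinuousLinearMap.coe_comp', Function.comp_apply, ContinuousLinearMap.prod_apply,
    ContinuousLinearMap.coe_fst', ContinuousLinearMap.coe_snd', smul_eq_mul]
  rw [show ((0 : Fin N → ℝ), s * z.2 ^ (s - 1) * (1 : ℝ))
      = (s * z.2 ^ (s - 1)) • (((0 : Fin N → ℝ), (1:ℝ)) : Pt N) from by simp [Prod.smul_def]]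
  rw [ContinuousLinearMap.map_smul, smul_eq_mul]
  ring

lemma pd_congr {N : ℕ} {f g : Pt N → ℝ} {z : Pt N} (h : f =ᶠ[nhds z] g) (v : Pt N) :
    pd v f z = pd v g z := by simp only [pd, h.fderiv_eq]

lemma pd_add {N : ℕ} {f g : Pt N → ℝ} {z : Pt N} (hf : DifferentiableAt ℝ f z)
    (hg : DifferentiableAt ℝ g z) (v : Pt N) :
    pd v (fun w => f w + g w) z = pd v f z + pd v g z := by
  simp only [pd, fderiv_fun_add hf hg, ContinuousLinearMap.add_apply]

lemma pd_diffAt {N : ℕ} {u : Pt N → ℝ} {z : Pt N} (hu : ContDiffAt ℝ 2 u z) (v : Pt N) :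
    DifferentiableAt ℝ (pd v u) z := by
  have h1 : ContDiffAt ℝ 1 (fderiv ℝ u) z := hu.fderiv_right (by norm_num)
  exact ((ContinuousLinearMap.apply ℝ ℝ v).differentiable.differentiableAt).comp z
      (h1.differentiableAt one_ne_zero)

lemma pd_comm {N : ℕ} {u : Pt N → ℝ} {z : Pt N} (hu : ContDiffAt ℝ 2 u z) (v w : Pt N) :
    pd v (pd w u) z = pd w (pd v u) z := by
  have hsym : IsSymmSndFDerivAt ℝ u z := hu.isSymmSndFDerivAt (by simp)
  have hd : DifferentiableAt ℝ (fderiv ℝ u) z :=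
    (hu.fderiv_right (by norm_num)).differentiableAt one_ne_zero
  have key : ∀ a b : Pt N, pd a (pd b u) z = fderiv ℝ (fderiv ℝ u) z a b := by
    intro a b
    have h := ((ContinuousLinearMap.apply ℝ ℝ b).hasFDerivAt.comp z hd.hasFDerivAt).fderiv
    rw [pd, show pd b u = fun w => (ContinuousLinearMap.apply ℝ ℝ b) (fderiv ℝ u w) from rfl,
      show (fun w => (ContinuousLinearMap.apply ℝ ℝ b) (fderiv ℝ u w))
      = (ContinuousLinearMap.apply ℝ ℝ b) ∘ fderiv ℝ u from rfl, h]
    rfl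
  rw [key v w, key w v, hsym v w]

lemma sum_factor {ι : Type*} (sf : Finset ι) (c : ℝ) (f g : ι → ℝ)
    (h : ∀ i ∈ sf, f i = c * g i) : ∑ i ∈ sf, f i = c * ∑ i ∈ sf, g i := by
  rw [Finset.mul_sum]; exact Finset.sum_congr rfl h

lemma sum_split {ι : Type*} (sf : Finset ι) (A B : ℝ) (f g h : ι → ℝ)
    (hfa : ∀ i ∈ sf, f i = A * g i + B * h i) :
    ∑ i ∈ sf, f i = A * ∑ i ∈ sf, g i + B * ∑ i ∈ sf, h i := by
  rw [Finset.mul_sum, Finset.mul_sum, ← Finset.sum_add_distrib]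
  exact Finset.sum_congr rfl hfa

lemma bvec_castSucc {N : ℕ} (i : Fin N) : (bvec (Fin.castSucc i) : Pt N) = ex i := by
  simp [bvec, i.isLt]

lemma bvec_last {N : ℕ} : (bvec (Fin.last N) : Pt N) = ey := by
  simp [bvec]

lemma blockA_xx {N : ℕ} (Q : Matrix (Fin N) (Fin N) ℝ) (q : Fin N → ℝ) (γ : ℝ) (i j : Fin N) :
    blockA Q q γ (Fin.castSucc i) (Fin.castSucc j) = Q i j := by
  simp [blockA, i.isLt, j.isLt]

lemma blockA_xy {N : ℕ} (Q : Matrix (Fin N) (Fin N) ℝ) (q : Fin N → ℝ) (γ : ℝ) (i : Fin N) :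
    blockA Q q γ (Fin.castSucc i) (Fin.last N) = q i := by
  simp [blockA, i.isLt]

lemma blockA_yx {N : ℕ} (Q : Matrix (Fin N) (Fin N) ℝ) (q : Fin N → ℝ) (γ : ℝ) (j : Fin N) :
    blockA Q q γ (Fin.last N) (Fin.castSucc j) = q j := by
  simp [blockA, j.isLt]

lemma blockA_yy {N : ℕ} (Q : Matrix (Fin N) (Fin N) ℝ) (q : Fin N → ℝ) (γ : ℝ) :
    blockA Q q γ (Fin.last N) (Fin.last N) = γ := by
  simp [blockA]

end auxST8

/-- With `β = (α₁−α₂)/2` and `α̃ = 2α₁/(α₁−α₂+2)`,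
`ℒ(T_{k,β} u) = T_{k,β}(y^{α̃} Tr(Ã D²u) + y^{α̃−1} ṽ·∇u − b̃ y^{α̃−2} u)`. -/
theorem statement8 (N : ℕ) (hN : 1 ≤ N)
    (Q : Matrix (Fin N) (Fin N) ℝ) (hQ : Q.IsSymm) (q d : Fin N → ℝ)
    (γ c b α₁ α₂ k p : ℝ) (hα : α₂ - α₁ ≠ 2) (hp1 : 1 ≤ p)
    (β αt : ℝ) (hβ : β = (α₁ - α₂) / 2) (hαt : αt = 2 * α₁ / (α₁ - α₂ + 2))
    (u : Pt N → ℝ) (hu : ContDiffOn ℝ 2 u {z : Pt N | 0 < z.2}) :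
    ∀ z : Pt N, 0 < z.2 →
      opL Q q d γ c b α₁ α₂ (Tkb N p k β u) z
        = Tkb N p k β
            (fun w =>
              w.2 ^ αt *
                  trHess (blockA Q (fun i => (β + 1) * q i) ((β + 1) ^ 2 * γ)) u w
                + w.2 ^ (αt - 1) *
                    ((∑ i, (2 * k * q i + d i) * pd (ex i) u w)
                      + (β + 1) * (c + (2 * k + β) * γ) * pd ey u w)
                - (b - k * (c + (k - 1) * γ)) * w.2 ^ (αt - 2) * u w) z := by
  intro z hz
  set C := |β + 1| ^ (1 / p) with hC
  have hopen : IsOpen {w : Pt N | 0 < w.2} := isOpen_lt continuous_const continuous_snd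
  have hsne : α₁ - α₂ + 2 ≠ 0 := fun h => hα (by linarith)
  have hst : (β + 1) * αt = α₁ := by rw [hαt, hβ]; field_simp
  have hCD : ∀ w : Pt N, 0 < w.2 → ContDiffAt ℝ 2 u w := fun w hw =>
    hu.contDiffAt (hopen.mem_nhds hw)
  have hdw : ∀ w : Pt N, 0 < w.2 → DifferentiableAt ℝ u w := fun w hw =>
    (hCD w hw).differentiableAt two_ne_zero
  have hd1 : ∀ w : Pt N, 0 < w.2 → ∀ v, DifferentiableAt ℝ (pd v u) w := fun w hw v =>
    pd_diffAt (hCD w hw) v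
  have hwz : (0:ℝ) < z.2 ^ (β + 1) := Real.rpow_pos_of_pos hz _
  have fuse : ∀ a b e : ℝ, a + b = e → z.2 ^ e = z.2 ^ a * z.2 ^ b := by
    intro a b e h; rw [← h, Real.rpow_add hz]
  have hTfun : Tkb N p k β u = fun w : Pt N => C * (w.2 ^ k * u (w.1, w.2 ^ (β + 1))) :=
    funext fun w => mul_assoc _ _ _
  have hUx : ∀ (j : Fin N) (w : Pt N), 0 < w.2 →
      pd (ex j) (Tkb N p k β u) w = C * (w.2 ^ k * pd (ex j) u (w.1, w.2 ^ (β + 1))) := by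
    intro j w hw
    rw [hTfun]
    exact key_pdx hw (hdw _ (Real.rpow_pos_of_pos hw _)) C k j
  have hUy : ∀ w : Pt N, 0 < w.2 →
      pd ey (Tkb N p k β u) w
        = (C * k) * (w.2 ^ (k - 1) * u (w.1, w.2 ^ (β + 1)))
          + (C * (β + 1)) * (w.2 ^ (β + k) * pd ey u (w.1, w.2 ^ (β + 1))) := by
    intro w hw
    rw [hTfun, key_pdy hw (hdw _ (Real.rpow_pos_of_pos hw _)) C k]
    rw [show w.2 ^ (β + k) = w.2 ^ β * w.2 ^ k from Real.rpow_add hw β k,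
      show β + 1 - 1 = β from by ring]
    ring
  have hevx : ∀ j : Fin N, pd (ex j) (Tkb N p k β u)
      =ᶠ[nhds z] fun w => C * (w.2 ^ k * pd (ex j) u (w.1, w.2 ^ (β + 1))) := fun j =>
    Filter.eventuallyEq_of_mem (hopen.mem_nhds hz) fun w hw => hUx j w hw
  have hevy : pd ey (Tkb N p k β u)
      =ᶠ[nhds z] fun w => (C * k) * (w.2 ^ (k - 1) * u (w.1, w.2 ^ (β + 1)))
          + (C * (β + 1)) * (w.2 ^ (β + k) * pd ey u (w.1, w.2 ^ (β + 1))) :=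
    Filter.eventuallyEq_of_mem (hopen.mem_nhds hz) fun w hw => hUy w hw
  have hdu0 : DifferentiableAt ℝ u (z.1, z.2 ^ (β + 1)) := hdw _ hwz
  have hd1y : DifferentiableAt ℝ (pd ey u) (z.1, z.2 ^ (β + 1)) := hd1 _ hwz ey
  have hd1x : ∀ j : Fin N, DifferentiableAt ℝ (pd (ex j) u) (z.1, z.2 ^ (β + 1)) :=
    fun j => hd1 _ hwz _
  have hxx : ∀ i j : Fin N, pd (ex i) (pd (ex j) (Tkb N p k β u)) z
      = C * (z.2 ^ k * pd (ex i) (pd (ex j) u) (z.1, z.2 ^ (β + 1))) := by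
    intro i j
    rw [pd_congr (hevx j)]
    exact key_pdx hz (hd1x j) C k i
  have hxy : ∀ i : Fin N, pd (ex i) (pd ey (Tkb N p k β u)) z
      = (C * k) * (z.2 ^ (k - 1) * pd (ex i) u (z.1, z.2 ^ (β + 1)))
        + (C * (β + 1)) * (z.2 ^ (β + k) * pd (ex i) (pd ey u) (z.1, z.2 ^ (β + 1))) := by
    intro i
    rw [pd_congr hevy,
      pd_add (key_diffAt hz hdu0 (C * k) (k - 1)) (key_diffAt hz hd1y (C * (β + 1)) (β + k)),
      key_pdx hz hdu0 (C * k) (k - 1) i, key_pdx hz hd1y (C * (β + 1)) (β + k) i]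
  have hyy : pd ey (pd ey (Tkb N p k β u)) z
      = (C * k) * ((k - 1) * z.2 ^ (k - 1 - 1) * u (z.1, z.2 ^ (β + 1))
            + (β + 1) * z.2 ^ (β + 1 - 1) * (z.2 ^ (k - 1) * pd ey u (z.1, z.2 ^ (β + 1))))
        + (C * (β + 1)) * ((β + k) * z.2 ^ (β + k - 1) * pd ey u (z.1, z.2 ^ (β + 1))
            + (β + 1) * z.2 ^ (β + 1 - 1) * (z.2 ^ (β + k) * pd ey (pd ey u) (z.1, z.2 ^ (β + 1)))) := by
    rw [pd_congr hevy,
      pd_add (key_diffAt hz hdu0 (C * k) (k - 1)) (key_diffAt hz hd1y (C * (β + 1)) (β + k)),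
      key_pdy hz hdu0 (C * k) (k - 1), key_pdy hz hd1y (C * (β + 1)) (β + k)]
  -- exponent identities
  have hE2a : (α₁ + α₂) / 2 + (β + k) = α₁ + k := by rw [hβ]; ring
  have hE1a : (α₁ + α₂) / 2 + (k - 1) = α₁ + k - (β + 1) := by rw [hβ]; ring
  have hE1b : (α₁ + α₂) / 2 - 1 + k = α₁ + k - (β + 1) := by rw [hβ]; ring
  have hE0a : α₂ + (k - 1 - 1) = α₁ + k - 2 * (β + 1) := by rw [hβ]; ring
  have hE0b : α₂ - 1 + (k - 1) = α₁ + k - 2 * (β + 1) := by rw [hβ]; ring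
  have hE1c : α₂ - 1 + (β + k) = α₁ + k - (β + 1) := by rw [hβ]; ring
  have hE0c : α₂ - 2 + k = α₁ + k - 2 * (β + 1) := by rw [hβ]; ring
  have hE1d : α₂ + (β + 1 - 1 + (k - 1)) = α₁ + k - (β + 1) := by rw [hβ]; ring
  have hE2b : α₂ + (β + 1 - 1 + (β + k)) = α₁ + k := by rw [hβ]; ring
  -- LHS terms
  have hT1 : z.2 ^ α₁ * (∑ i, ∑ j, Q i j * pd (ex i) (pd (ex j) (Tkb N p k β u)) z)
      = (C * z.2 ^ (α₁ + k)) *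
          (∑ i, ∑ j, Q i j * pd (ex i) (pd (ex j) u) (z.1, z.2 ^ (β + 1))) := by
    rw [sum_factor Finset.univ (C * z.2 ^ k) _
        (fun i => ∑ j, Q i j * pd (ex i) (pd (ex j) u) (z.1, z.2 ^ (β + 1)))
        (fun i _ => sum_factor Finset.univ (C * z.2 ^ k) _
          (fun j => Q i j * pd (ex i) (pd (ex j) u) (z.1, z.2 ^ (β + 1)))
          (fun j _ => by rw [hxx i j]; ring)),
      fuse α₁ k (α₁ + k) rfl]
    ring
  have hT2 : 2 * z.2 ^ ((α₁ + α₂) / 2) * (∑ i, q i * pd (ex i) (pd ey (Tkb N p k β u)) z)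
      = (2 * C * k * z.2 ^ (α₁ + k - (β + 1))) *
          (∑ i, q i * pd (ex i) u (z.1, z.2 ^ (β + 1)))
        + (2 * C * (β + 1) * z.2 ^ (α₁ + k)) *
          (∑ i, q i * pd (ex i) (pd ey u) (z.1, z.2 ^ (β + 1))) := by
    rw [sum_split Finset.univ (C * k * z.2 ^ (k - 1)) (C * (β + 1) * z.2 ^ (β + k)) _
        (fun i => q i * pd (ex i) u (z.1, z.2 ^ (β + 1)))
        (fun i => q i * pd (ex i) (pd ey u) (z.1, z.2 ^ (β + 1)))
        (fun i _ => by rw [hxy i]; ring),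
      fuse ((α₁ + α₂) / 2) (k - 1) (α₁ + k - (β + 1)) hE1a,
      fuse ((α₁ + α₂) / 2) (β + k) (α₁ + k) hE2a]
    ring
  have hT3 : γ * z.2 ^ α₂ * pd ey (pd ey (Tkb N p k β u)) z
      = (γ * C * (β + 1) ^ 2 * z.2 ^ (α₁ + k)) * pd ey (pd ey u) (z.1, z.2 ^ (β + 1))
        + (γ * C * (β + 1) * (2 * k + β) * z.2 ^ (α₁ + k - (β + 1))) *
            pd ey u (z.1, z.2 ^ (β + 1))
        + (γ * C * k * (k - 1) * z.2 ^ (α₁ + k - 2 * (β + 1))) * u (z.1, z.2 ^ (β + 1)) := by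
    rw [hyy,
      fuse α₂ (β + 1 - 1 + (β + k)) (α₁ + k) hE2b,
      fuse (β + 1 - 1) (β + k) (β + 1 - 1 + (β + k)) rfl,
      fuse α₂ (β + 1 - 1 + (k - 1)) (α₁ + k - (β + 1)) hE1d,
      fuse (β + 1 - 1) (k - 1) (β + 1 - 1 + (k - 1)) rfl,
      fuse (β + 1 - 1) (k - 1) (β + k - 1) (by ring),
      fuse α₂ (k - 1 - 1) (α₁ + k - 2 * (β + 1)) hE0a]
    ring
  have hT4 : z.2 ^ ((α₁ + α₂) / 2 - 1) * (∑ i, d i * pd (ex i) (Tkb N p k β u) z)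
      = (C * z.2 ^ (α₁ + k - (β + 1))) * (∑ i, d i * pd (ex i) u (z.1, z.2 ^ (β + 1))) := by
    rw [sum_factor Finset.univ (C * z.2 ^ k) _
        (fun i => d i * pd (ex i) u (z.1, z.2 ^ (β + 1)))
        (fun i _ => by rw [hUx i z hz]; ring),
      fuse ((α₁ + α₂) / 2 - 1) k (α₁ + k - (β + 1)) hE1b]
    ring
  have hT5 : c * z.2 ^ (α₂ - 1) * pd ey (Tkb N p k β u) z
      = (c * C * k * z.2 ^ (α₁ + k - 2 * (β + 1))) * u (z.1, z.2 ^ (β + 1))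
        + (c * C * (β + 1) * z.2 ^ (α₁ + k - (β + 1))) * pd ey u (z.1, z.2 ^ (β + 1)) := by
    rw [hUy z hz,
      fuse (α₂ - 1) (k - 1) (α₁ + k - 2 * (β + 1)) hE0b,
      fuse (α₂ - 1) (β + k) (α₁ + k - (β + 1)) hE1c]
    ring
  have hT6 : b * z.2 ^ (α₂ - 2) * Tkb N p k β u z
      = (b * C * z.2 ^ (α₁ + k - 2 * (β + 1))) * u (z.1, z.2 ^ (β + 1)) := by
    rw [show Tkb N p k β u z = C * (z.2 ^ k * u (z.1, z.2 ^ (β + 1))) from congrFun hTfun z,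
      fuse (α₂ - 2) k (α₁ + k - 2 * (β + 1)) hE0c]
    ring
  -- the transformed point facts for the right-hand side
  have hTgen : ∀ F : Pt N → ℝ, Tkb N p k β F z = C * (z.2 ^ k * F (z.1, z.2 ^ (β + 1))) :=
    fun F => mul_assoc _ _ _
  have hcomm : ∀ j : Fin N, pd ey (pd (ex j) u) (z.1, z.2 ^ (β + 1))
      = pd (ex j) (pd ey u) (z.1, z.2 ^ (β + 1)) := fun j => pd_comm (hCD _ hwz) ey (ex j)
  have hTr : trHess (blockA Q (fun i => (β + 1) * q i) ((β + 1) ^ 2 * γ)) u (z.1, z.2 ^ (β + 1))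
      = (∑ i, ∑ j, Q i j * pd (ex i) (pd (ex j) u) (z.1, z.2 ^ (β + 1)))
        + 2 * (β + 1) * (∑ i, q i * pd (ex i) (pd ey u) (z.1, z.2 ^ (β + 1)))
        + (β + 1) ^ 2 * γ * pd ey (pd ey u) (z.1, z.2 ^ (β + 1)) := by
    simp only [trHess, Fin.sum_univ_castSucc, bvec_castSucc, bvec_last, blockA_xx, blockA_xy,
      blockA_yx, blockA_yy, hcomm]
    rw [Finset.sum_add_distrib]
    have hfac : ∑ x : Fin N, (β + 1) * q x * pd (ex x) (pd ey u) (z.1, z.2 ^ (β + 1))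
        = (β + 1) * ∑ x : Fin N, q x * pd (ex x) (pd ey u) (z.1, z.2 ^ (β + 1)) :=
      sum_factor _ _ _ _ (fun i _ => by ring)
    rw [hfac]
    ring
  have hGr : (∑ i, (2 * k * q i + d i) * pd (ex i) u (z.1, z.2 ^ (β + 1)))
      = 2 * k * (∑ i, q i * pd (ex i) u (z.1, z.2 ^ (β + 1)))
        + (∑ i, d i * pd (ex i) u (z.1, z.2 ^ (β + 1))) := by
    rw [sum_split Finset.univ (2 * k) 1
      (fun i => (2 * k * q i + d i) * pd (ex i) u (z.1, z.2 ^ (β + 1)))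
      (fun i => q i * pd (ex i) u (z.1, z.2 ^ (β + 1)))
      (fun i => d i * pd (ex i) u (z.1, z.2 ^ (β + 1))) (fun i _ => by ring), one_mul]
  have hp2 : (z.2 ^ (β + 1) : ℝ) ^ αt = z.2 ^ α₁ := by
    rw [← Real.rpow_mul hz.le, hst]
  have hp1 : (z.2 ^ (β + 1) : ℝ) ^ (αt - 1) = z.2 ^ (α₁ - (β + 1)) := by
    rw [← Real.rpow_mul hz.le, mul_sub, hst, mul_one]
  have hp0 : (z.2 ^ (β + 1) : ℝ) ^ (αt - 2) = z.2 ^ (α₁ - 2 * (β + 1)) := by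
    rw [← Real.rpow_mul hz.le]; congr 1; rw [mul_sub, hst]; ring
  simp only [opL]
  rw [hT1, hT2, hT3, hT4, hT5, hT6]
  simp only [hTgen]
  rw [hp2, hp1, hp0, hTr, hGr,
    fuse k α₁ (α₁ + k) (by ring),
    fuse k (α₁ - (β + 1)) (α₁ + k - (β + 1)) (by ring),
    fuse k (α₁ - 2 * (β + 1)) (α₁ + k - 2 * (β + 1)) (by ring)]
  ring
end
end

section
/- Let N ≥ 1, let Q be a real symmetric N×N matrix, q, d ∈ ℝ^N, γ, c, b ∈ ℝ, α₁, α₂ ∈ ℝ, β ∈ ℝ with β ≠ −1, and ω ∈ ℝ^N. Let ℒ be the operator with parameters (Q, q, γ, d, c, b, α₁, α₂). Then for every u ∈ C²(ℝ^{N+1}_+) and every point of ℝ^{N+1}_+ one has ℒ(S_{β,ω}u) = S_{β,ω}(Mu), where Mu := y^{α₁} Tr(Q D²_x u) + 2(β+1) y^{(α₁+α₂+2β)/2} (D²_x u · ω)·q + γ(β+1)² y^{α₂+2β} (D²_x u · ω)·ω + 2 y^{(α₁+α₂)/2} q·∇_x(∂_y u) + 2γ(β+1) y^{α₂+β} ω·∇_x(∂_y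 u) + γ y^{α₂} ∂²_{yy}u + c y^{α₂−1} ∂_y u − b y^{α₂−2} u + (c+γβ)(β+1) y^{α₂+β−1} ω·∇_x u + y^{(α₁+α₂)/2−1} d·∇_x u. -/
open MeasureTheory Real

noncomputable section

/-- The map `S_{β,ω} u (x, y) = u(x + ω y^{β+1}, y)`. -/
def Sbo {N : ℕ} (β : ℝ) (ω : Fin N → ℝ) (u : Pt N → ℝ) : Pt N → ℝ := fun z =>
  u (z.1 + z.2 ^ (β + 1) • ω, z.2)

namespace Helper
variable {N : ℕ}

def phiM (β : ℝ) (ω : Fin N → ℝ) (z : Pt N) : Pt N := (z.1 + z.2 ^ (β + 1) • ω, z.2)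

def Dphi (β : ℝ) (ω : Fin N → ℝ) (y : ℝ) : Pt N →L[ℝ] Pt N :=
  ((ContinuousLinearMap.fst ℝ (Fin N → ℝ) ℝ) +
    ((β + 1) * y ^ β) • ((ContinuousLinearMap.snd ℝ (Fin N → ℝ) ℝ).smulRight ω)).prod
    (ContinuousLinearMap.snd ℝ (Fin N → ℝ) ℝ)

lemma Dphi_apply (β : ℝ) (ω : Fin N → ℝ) (y : ℝ) (v : Pt N) :
    Dphi β ω y v = (v.1 + ((β + 1) * y ^ β * v.2) • ω, v.2) := by
  simp [Dphi, smul_smul]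

lemma hasFDerivAt_phi (β : ℝ) (ω : Fin N → ℝ) (z : Pt N) (hz : 0 < z.2) :
    HasFDerivAt (phiM β ω) (Dphi β ω z.2) z := by
  have h1 : HasDerivAt (fun y : ℝ => y ^ (β + 1)) ((β + 1) * z.2 ^ β) z.2 := by
    have := Real.hasDerivAt_rpow_const (x := z.2) (p := β + 1) (Or.inl hz.ne')
    simpa using this
  have h2 : HasFDerivAt (fun w : Pt N => w.2 ^ (β + 1))
      (((β + 1) * z.2 ^ β) • (ContinuousLinearMap.snd ℝ (Fin N → ℝ) ℝ)) z := by
    exact h1.comp_hasFDerivAt z (hasFDerivAt_snd (p := z))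
  have h3 := h2.smul_const ω
  have h4 := (hasFDerivAt_fst (p := z)).add h3
  have h5 := HasFDerivAt.prodMk h4 (hasFDerivAt_snd (p := z))
  exact h5.congr_fderiv (by ext v <;> simp [Dphi, smul_smul])

lemma apply_smul_omega (ω : Fin N → ℝ) (L : Pt N →L[ℝ] ℝ) (a t : ℝ) :
    L (a • ω, t) = a * (∑ i, ω i * L (ex i)) + t * L ey := by
  have key : ((a • ω, t) : Pt N) = (∑ i, (a * ω i) • ex i) + t • ey := by
    apply Prod.ext
    · simp only [Prod.fst_sum, Prod.fst_add, Prod.smul_fst, ex, ey, Prod.snd_add]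
      funext j
      simp [Finset.sum_apply, Pi.single_apply, mul_ite]
    · simp [ex, ey, Prod.snd_sum]
  rw [key, map_add, map_sum]
  simp only [_root_.map_smul, smul_eq_mul]
  rw [Finset.mul_sum]
  congr 1
  · exact Finset.sum_congr rfl fun i _ => by ring

lemma Sbo_hasFDerivAt (β : ℝ) (ω : Fin N → ℝ) {g : Pt N → ℝ} {z : Pt N} (hz : 0 < z.2)
    (hg : DifferentiableAt ℝ g (phiM β ω z)) :
    HasFDerivAt (Sbo β ω g) ((fderiv ℝ g (phiM β ω z)).comp (Dphi β ω z.2)) z :=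
  hg.hasFDerivAt.comp z (hasFDerivAt_phi β ω z hz)

lemma Sbo_differentiableAt (β : ℝ) (ω : Fin N → ℝ) {g : Pt N → ℝ} {z : Pt N} (hz : 0 < z.2)
    (hg : DifferentiableAt ℝ g (phiM β ω z)) : DifferentiableAt ℝ (Sbo β ω g) z :=
  (Sbo_hasFDerivAt β ω hz hg).differentiableAt

lemma pd_ex_Sbo (β : ℝ) (ω : Fin N → ℝ) {g : Pt N → ℝ} {z : Pt N} (hz : 0 < z.2)
    (hg : DifferentiableAt ℝ g (phiM β ω z)) (i : Fin N) :
    pd (ex i) (Sbo β ω g) z = pd (ex i) g (phiM β ω z) := by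
  unfold pd
  rw [(Sbo_hasFDerivAt β ω hz hg).fderiv]
  rw [ContinuousLinearMap.comp_apply, Dphi_apply]
  simp [ex]

lemma pd_ey_Sbo (β : ℝ) (ω : Fin N → ℝ) {g : Pt N → ℝ} {z : Pt N} (hz : 0 < z.2)
    (hg : DifferentiableAt ℝ g (phiM β ω z)) :
    pd ey (Sbo β ω g) z = pd ey g (phiM β ω z)
      + ((β + 1) * z.2 ^ β) * ∑ i, ω i * pd (ex i) g (phiM β ω z) := by
  unfold pd
  rw [(Sbo_hasFDerivAt β ω hz hg).fderiv]
  rw [ContinuousLinearMap.comp_apply, Dphi_apply]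
  have : (Dphi β ω z.2) ey = ((((β + 1) * z.2 ^ β) • ω : Fin N → ℝ), (1:ℝ)) := by
    rw [Dphi_apply]; simp [ey]
  show (fderiv ℝ g (phiM β ω z)) ((ey : Pt N).1 + ((β + 1) * z.2 ^ β * (ey : Pt N).2) • ω, (ey : Pt N).2)
      = _
  have h2 : ((ey : Pt N).1 + ((β + 1) * z.2 ^ β * (ey : Pt N).2) • ω, (ey : Pt N).2)
      = ((((β + 1) * z.2 ^ β) • ω : Fin N → ℝ), (1:ℝ)) := by simp [ey]
  rw [h2, apply_smul_omega]
  ring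

lemma pd_congr {f g : Pt N → ℝ} {z : Pt N} (v : Pt N) (h : f =ᶠ[nhds z] g) :
    pd v f z = pd v g z := by
  unfold pd; rw [h.fderiv_eq]

lemma pd_add {f g : Pt N → ℝ} {z : Pt N} (v : Pt N)
    (hf : DifferentiableAt ℝ f z) (hg : DifferentiableAt ℝ g z) :
    pd v (fun w => f w + g w) z = pd v f z + pd v g z := by
  unfold pd; rw [fderiv_fun_add hf hg]; simp

lemma pd_mul {f g : Pt N → ℝ} {z : Pt N} (v : Pt N)
    (hf : DifferentiableAt ℝ f z) (hg : DifferentiableAt ℝ g z) :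
    pd v (fun w => f w * g w) z = pd v f z * g z + f z * pd v g z := by
  unfold pd; rw [fderiv_fun_mul hf hg]; simp; ring

lemma pd_const_mul {f : Pt N → ℝ} {z : Pt N} (v : Pt N) (a : ℝ)
    (hf : DifferentiableAt ℝ f z) :
    pd v (fun w => a * f w) z = a * pd v f z := by
  unfold pd; rw [fderiv_const_mul hf]; simp

lemma pd_sum {f : Fin N → Pt N → ℝ} {z : Pt N} (v : Pt N)
    (hf : ∀ i, DifferentiableAt ℝ (f i) z) :
    pd v (fun w => ∑ i, f i w) z = ∑ i, pd v (f i) z := by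
  unfold pd
  rw [fderiv_fun_sum (fun i _ => hf i)]
  simp

lemma hasFDerivAt_h (β : ℝ) {z : Pt N} (hz : 0 < z.2) :
    HasFDerivAt (fun w : Pt N => (β + 1) * w.2 ^ β)
      (((β + 1) * (β * z.2 ^ (β - 1))) • (ContinuousLinearMap.snd ℝ (Fin N → ℝ) ℝ)) z := by
  have h1 : HasDerivAt (fun y : ℝ => y ^ β) (β * z.2 ^ (β - 1)) z.2 :=
    Real.hasDerivAt_rpow_const (Or.inl hz.ne')
  have h2 : HasFDerivAt (fun w : Pt N => w.2 ^ β)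
      ((β * z.2 ^ (β - 1)) • (ContinuousLinearMap.snd ℝ (Fin N → ℝ) ℝ)) z := by
    exact h1.comp_hasFDerivAt z (hasFDerivAt_snd (p := z))
  have h3 := h2.const_mul (β + 1)
  exact h3.congr_fderiv (by ext v <;> simp [smul_smul])

lemma pd_h (β : ℝ) {z : Pt N} (hz : 0 < z.2) (v : Pt N) :
    pd v (fun w : Pt N => (β + 1) * w.2 ^ β) z = (β + 1) * (β * z.2 ^ (β - 1)) * v.2 := by
  unfold pd; rw [(hasFDerivAt_h β hz).fderiv]; simp [mul_assoc]

lemma sum_helper (f g a : Fin N → ℝ) (s : ℝ) (A : Fin N → Fin N → ℝ) :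
    ∑ i, f i * (a i + s * ∑ j, g j * A i j)
      = (∑ i, f i * a i) + s * ∑ i, ∑ j, f i * g j * A i j := by
  simp only [mul_add, Finset.sum_add_distrib]
  congr 1
  rw [Finset.mul_sum]
  refine Finset.sum_congr rfl fun i _ => ?_
  simp only [Finset.mul_sum]
  exact Finset.sum_congr rfl fun j _ => by ring

lemma swap_helper (g : Fin N → ℝ) (A : Fin N → Fin N → ℝ) :
    ∑ i, g i * ∑ j, g j * A j i = ∑ i, ∑ j, g i * g j * A i j := by
  simp only [Finset.mul_sum]
  rw [Finset.sum_comm]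
  exact Finset.sum_congr rfl fun i _ => Finset.sum_congr rfl fun j _ => by ring

lemma pd_comm {u : Pt N → ℝ} {z : Pt N} (hC : ContDiffAt ℝ 2 u z) (i : Fin N) :
    pd ey (pd (ex i) u) z = pd (ex i) (pd ey u) z := by
  have hfd : DifferentiableAt ℝ (fderiv ℝ u) z :=
    (hC.fderiv_right (m := 1) (by norm_num)).differentiableAt (by norm_num)
  have hsymm := hC.isSymmSndFDerivAt (by norm_num)
  unfold pd
  rw [fderiv_clm_apply hfd (differentiableAt_const (ex i)),
      fderiv_clm_apply hfd (differentiableAt_const ey)]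
  simp only [fderiv_fun_const, Pi.zero_apply, ContinuousLinearMap.comp_zero,
    ContinuousLinearMap.zero_apply, ContinuousLinearMap.add_apply,
    ContinuousLinearMap.flip_apply, zero_add]
  exact hsymm ey (ex i)

lemma Sbo_apply (β : ℝ) (ω : Fin N → ℝ) (g : Pt N → ℝ) (w : Pt N) :
    Sbo β ω g w = g (phiM β ω w) := rfl

lemma swap2 (g : Fin N → ℝ) (A : Fin N → Fin N → ℝ) :
    ∑ i, ∑ j, g i * g j * A j i = ∑ i, ∑ j, g i * g j * A i j := by
  rw [Finset.sum_comm]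
  exact Finset.sum_congr rfl fun i _ => Finset.sum_congr rfl fun j _ => by ring

end Helper


/-- Conjugation of the degenerate operator by `S_{β,ω}`:
`ℒ(S_{β,ω} u) = S_{β,ω}(M u)`. -/
theorem statement12 (N : ℕ) (hN : 1 ≤ N)
    (Q : Matrix (Fin N) (Fin N) ℝ) (hQ : Q.IsSymm) (q d : Fin N → ℝ)
    (γ c b α₁ α₂ β : ℝ) (hβ : β ≠ -1) (ω : Fin N → ℝ)
    (u : Pt N → ℝ) (hu : ContDiffOn ℝ 2 u {z : Pt N | 0 < z.2}) :
    ∀ z : Pt N, 0 < z.2 →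
      opL Q q d γ c b α₁ α₂ (Sbo β ω u) z
        = Sbo β ω (fun w =>
            w.2 ^ α₁ * (∑ i, ∑ j, Q i j * pd (ex i) (pd (ex j) u) w)
              + 2 * (β + 1) * w.2 ^ ((α₁ + α₂ + 2 * β) / 2) *
                  (∑ i, ∑ j, q i * ω j * pd (ex i) (pd (ex j) u) w)
              + γ * (β + 1) ^ 2 * w.2 ^ (α₂ + 2 * β) *
                  (∑ i, ∑ j, ω i * ω j * pd (ex i) (pd (ex j) u) w)
              + 2 * w.2 ^ ((α₁ + α₂) / 2) * (∑ i, q i * pd (ex i) (pd ey u) w)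
              + 2 * γ * (β + 1) * w.2 ^ (α₂ + β) * (∑ i, ω i * pd (ex i) (pd ey u) w)
              + γ * w.2 ^ α₂ * pd ey (pd ey u) w
              + c * w.2 ^ (α₂ - 1) * pd ey u w
              - b * w.2 ^ (α₂ - 2) * u w
              + (c + γ * β) * (β + 1) * w.2 ^ (α₂ + β - 1) * (∑ i, ω i * pd (ex i) u w)
              + w.2 ^ ((α₁ + α₂) / 2 - 1) * (∑ i, d i * pd (ex i) u w)) z := by
  intro z hz
  have hUo : IsOpen {w : Pt N | 0 < w.2} := isOpen_lt continuous_const continuous_snd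
  have hw0 : 0 < (Helper.phiM β ω z).2 := hz
  have hC : ∀ w : Pt N, 0 < w.2 → ContDiffAt ℝ 2 u w := fun w hw =>
    hu.contDiffAt (hUo.mem_nhds hw)
  have hud : ∀ w : Pt N, 0 < w.2 → DifferentiableAt ℝ u w := fun w hw =>
    (hC w hw).differentiableAt two_ne_zero
  have hpd : ∀ (v : Pt N) (w : Pt N), 0 < w.2 → DifferentiableAt ℝ (pd v u) w := by
    intro v w hw
    have hfd : DifferentiableAt ℝ (fderiv ℝ u) w :=
      ((hC w hw).fderiv_right (m := 1) (by norm_num)).differentiableAt (by norm_num)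
    exact hfd.clm_apply (differentiableAt_const v)
  -- eventual equalities on the open upper half space
  have hev_ex : ∀ j : Fin N, pd (ex j) (Sbo β ω u) =ᶠ[nhds z] Sbo β ω (pd (ex j) u) := by
    intro j
    refine Filter.eventuallyEq_of_mem (hUo.mem_nhds hz) fun w hw => ?_
    exact Helper.pd_ex_Sbo β ω hw (hud _ hw) j
  have hev_ey : pd ey (Sbo β ω u) =ᶠ[nhds z]
      (fun w => Sbo β ω (pd ey u) w
        + ((β + 1) * w.2 ^ β) * ∑ j, ω j * Sbo β ω (pd (ex j) u) w) := by
    refine Filter.eventuallyEq_of_mem (hUo.mem_nhds hz) fun w hw => ?_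
    exact Helper.pd_ey_Sbo β ω hw (hud _ hw)
  -- differentiability at z of the building blocks
  have dSbo : ∀ v : Pt N, DifferentiableAt ℝ (Sbo β ω (pd v u)) z := fun v =>
    Helper.Sbo_differentiableAt β ω hz (hpd v _ hw0)
  have dh : DifferentiableAt ℝ (fun w : Pt N => (β + 1) * w.2 ^ β) z :=
    (Helper.hasFDerivAt_h β hz).differentiableAt
  have dF : DifferentiableAt ℝ (fun w => ∑ j, ω j * Sbo β ω (pd (ex j) u) w) z := by
    apply DifferentiableAt.fun_sum
    intro j _
    exact (dSbo (ex j)).const_mul (ω j)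
  have hterm : ∀ (v : Pt N) (j : Fin N),
      pd v (fun w => ω j * Sbo β ω (pd (ex j) u) w) z
        = ω j * pd v (Sbo β ω (pd (ex j) u)) z := fun v j =>
    Helper.pd_const_mul v (ω j) (dSbo (ex j))
  -- first derivatives
  have D : ∀ i : Fin N, pd (ex i) (Sbo β ω u) z = pd (ex i) u (Helper.phiM β ω z) :=
    fun i => Helper.pd_ex_Sbo β ω hz (hud _ hw0) i
  have E : pd ey (Sbo β ω u) z = pd ey u (Helper.phiM β ω z)
      + ((β + 1) * z.2 ^ β) * ∑ i, ω i * pd (ex i) u (Helper.phiM β ω z) :=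
    Helper.pd_ey_Sbo β ω hz (hud _ hw0)
  -- pure second x-derivatives
  have A : ∀ i j : Fin N, pd (ex i) (pd (ex j) (Sbo β ω u)) z
      = pd (ex i) (pd (ex j) u) (Helper.phiM β ω z) := by
    intro i j
    rw [Helper.pd_congr (ex i) (hev_ex j)]
    exact Helper.pd_ex_Sbo β ω hz (hpd (ex j) _ hw0) i
  -- mixed second derivatives
  have B : ∀ i : Fin N, pd (ex i) (pd ey (Sbo β ω u)) z
      = pd (ex i) (pd ey u) (Helper.phiM β ω z)
        + ((β + 1) * z.2 ^ β) * ∑ j, ω j * pd (ex i) (pd (ex j) u) (Helper.phiM β ω z) := by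
    intro i
    rw [Helper.pd_congr (ex i) hev_ey, Helper.pd_add (ex i) (dSbo ey) (dh.fun_mul dF),
      Helper.pd_mul (ex i) dh dF, Helper.pd_h β hz,
      Helper.pd_sum (ex i) (fun j => (dSbo (ex j)).const_mul (ω j)),
      Helper.pd_ex_Sbo β ω hz (hpd ey _ hw0) i]
    simp only [hterm, Helper.pd_ex_Sbo β ω hz (hpd _ _ hw0)]
    simp only [ex, ey]
    ring
  -- second y-derivative
  have Cc : pd ey (pd ey (Sbo β ω u)) z
      = pd ey (pd ey u) (Helper.phiM β ω z)
        + ((β + 1) * z.2 ^ β) * ∑ i, ω i * pd (ex i) (pd ey u) (Helper.phiM β ω z)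
        + ((β + 1) * (β * z.2 ^ (β - 1)))
            * ∑ i, ω i * pd (ex i) u (Helper.phiM β ω z)
        + ((β + 1) * z.2 ^ β) * ∑ i, ω i *
            (pd ey (pd (ex i) u) (Helper.phiM β ω z)
              + ((β + 1) * z.2 ^ β) * ∑ j, ω j * pd (ex j) (pd (ex i) u) (Helper.phiM β ω z)) := by
    rw [Helper.pd_congr ey hev_ey, Helper.pd_add ey (dSbo ey) (dh.fun_mul dF),
      Helper.pd_mul ey dh dF, Helper.pd_h β hz,
      Helper.pd_sum ey (fun j => (dSbo (ex j)).const_mul (ω j)),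
      Helper.pd_ey_Sbo β ω hz (hpd ey _ hw0)]
    simp only [hterm, Helper.pd_ey_Sbo β ω hz (hpd _ _ hw0)]
    simp only [Helper.Sbo_apply, ey]
    ring
  -- symmetry of second derivatives at the image point
  have hcomm : ∀ i : Fin N, pd ey (pd (ex i) u) (Helper.phiM β ω z)
      = pd (ex i) (pd ey u) (Helper.phiM β ω z) := fun i =>
    Helper.pd_comm (hC _ hw0) i
  -- now unfold everything and compute
  simp only [opL, Helper.Sbo_apply]
  have hy : (Helper.phiM β ω z).2 = z.2 := rfl
  rw [Cc]
  simp only [A, B, D, E, hcomm, hy]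
  rw [Helper.sum_helper q ω (fun i => pd (ex i) (pd ey u) (Helper.phiM β ω z))
      ((β + 1) * z.2 ^ β) (fun i j => pd (ex i) (pd (ex j) u) (Helper.phiM β ω z)),
    Helper.sum_helper ω ω (fun i => pd (ex i) (pd ey u) (Helper.phiM β ω z))
      ((β + 1) * z.2 ^ β) (fun i j => pd (ex j) (pd (ex i) u) (Helper.phiM β ω z)),
    Helper.swap2 ω (fun i j => pd (ex i) (pd (ex j) u) (Helper.phiM β ω z))]
  -- power bookkeeping
  have hp1 : z.2 ^ ((α₁ + α₂ + 2 * β) / 2) = z.2 ^ ((α₁ + α₂) / 2) * z.2 ^ β := by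
    rw [show (α₁ + α₂ + 2 * β) / 2 = (α₁ + α₂) / 2 + β by ring, Real.rpow_add hz]
  have hp2 : z.2 ^ (α₂ + 2 * β) = z.2 ^ α₂ * z.2 ^ β * z.2 ^ β := by
    rw [show α₂ + 2 * β = α₂ + β + β by ring, Real.rpow_add hz, Real.rpow_add hz]
  have hp3 : z.2 ^ (α₂ + β) = z.2 ^ α₂ * z.2 ^ β := by rw [Real.rpow_add hz]
  have hp4 : z.2 ^ (α₂ + β - 1) = z.2 ^ α₂ * z.2 ^ (β - 1) := by
    rw [show α₂ + β - 1 = α₂ + (β - 1) by ring, Real.rpow_add hz]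
  have hp5 : z.2 ^ (α₂ - 1) * z.2 ^ β = z.2 ^ α₂ * z.2 ^ (β - 1) := by
    rw [← Real.rpow_add hz, ← Real.rpow_add hz]
    ring_nf
  rw [hp1, hp2, hp3, hp4]
  rw [show c * z.2 ^ (α₂ - 1) *
      (pd ey u (Helper.phiM β ω z)
        + (β + 1) * z.2 ^ β * ∑ i, ω i * pd (ex i) u (Helper.phiM β ω z))
      = c * z.2 ^ (α₂ - 1) * pd ey u (Helper.phiM β ω z)
        + c * (β + 1) * (z.2 ^ (α₂ - 1) * z.2 ^ β)
            * ∑ i, ω i * pd (ex i) u (Helper.phiM β ω z) by ring, hp5]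
  ring
end
end

section
/- Let N ≥ 1, let Q be a real symmetric N×N matrix, q, d ∈ ℝ^N, γ, c, b ∈ ℝ, α₁, α₂ ∈ ℝ with α₂ − α₁ ≠ 2, and ω ∈ ℝ^N. Set β := (α₁−α₂)/2. Let ℒ be the operator with parameters (Q, q, γ, d, c, b, α₁, α₂), and let ℒ̃ be the operator of the same form with parameters Q̃ := Q + 2(β+1) q⊗ω + γ(β+1)² ω⊗ω, q̃ := q + γ(β+1)ω, d̃ := d + (c+γβ)(β+1)ω, and the same γ, c, b, α₁, α₂, where Tr((q⊗ω) D²_x u) := (D²_x u · ω)·q. Then for every u ∈ C²(ℝ^{N+1}_+) and every point of ℝ^{N+1}_+ one has ℒ(S_{β,ω}u) = S_{β,ω}(ℒ̃u). -/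
open MeasureTheory Real

noncomputable section

namespace St13
variable {N : ℕ}
def Tm (β : ℝ) (ω : Fin N → ℝ) (z : Pt N) : Pt N := (z.1 + z.2 ^ (β + 1) • ω, z.2)
def Ov (ω : Fin N → ℝ) : Pt N := (ω, 0)
def Lm (ω : Fin N → ℝ) (a : ℝ) : Pt N →L[ℝ] Pt N :=
  ((ContinuousLinearMap.fst ℝ (Fin N → ℝ) ℝ)
    + (a • (ContinuousLinearMap.snd ℝ (Fin N → ℝ) ℝ)).smulRight ω).prod
    (ContinuousLinearMap.snd ℝ (Fin N → ℝ) ℝ)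

lemma Lm_apply (ω : Fin N → ℝ) (a : ℝ) (v : Pt N) :
    Lm ω a v = (v.1 + (a * v.2) • ω, v.2) := by
  simp [Lm, smul_smul]

lemma Lm_ex (ω : Fin N → ℝ) (a : ℝ) (i : Fin N) : Lm ω a (ex i) = ex i := by
  simp [Lm_apply, ex]

lemma Lm_ey (ω : Fin N → ℝ) (a : ℝ) : Lm ω a (ey : Pt N) = ey + a • Ov ω := by
  simp [Lm_apply, ey, Ov, Prod.ext_iff]

lemma Ov_eq (ω : Fin N → ℝ) : Ov ω = ∑ i, ω i • (ex i : Pt N) := by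
  ext j
  · simp [Ov, ex, Prod.fst_sum, Finset.sum_apply, Pi.single_apply]
  · simp [Ov, ex, Prod.snd_sum]

lemma clmOv₂ (ω : Fin N → ℝ) (φ : Pt N →L[ℝ] ℝ) : φ (Ov ω) = ∑ i, ω i * φ (ex i) := by
  rw [Ov_eq, map_sum]; simp

lemma clmOv₁ (ω : Fin N → ℝ) (Hm : Pt N →L[ℝ] (Pt N →L[ℝ] ℝ)) (v : Pt N) :
    Hm (Ov ω) v = ∑ i, ω i * Hm (ex i) v := by
  rw [Ov_eq, map_sum]; simp

lemma ex_snd (i : Fin N) : (ex (N := N) i).2 = (0:ℝ) := rfl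
lemma ey_snd : (ey : Pt N).2 = (1:ℝ) := rfl

lemma hasFDerivAt_Tm (β : ℝ) (ω : Fin N → ℝ) {z : Pt N} (hz : 0 < z.2) :
    HasFDerivAt (Tm β ω) (Lm ω ((β + 1) * z.2 ^ β)) z := by
  have h0 : HasDerivAt (fun t : ℝ => t ^ (β + 1)) ((β + 1) * z.2 ^ β) z.2 := by
    simpa [add_sub_cancel_right] using
      (Real.hasDerivAt_rpow_const (x := z.2) (p := β + 1) (Or.inl hz.ne'))
  have h1 : HasFDerivAt (fun z : Pt N => z.2 ^ (β + 1))
      (((β + 1) * z.2 ^ β) • ContinuousLinearMap.snd ℝ (Fin N → ℝ) ℝ) z :=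
    h0.comp_hasFDerivAt z hasFDerivAt_snd
  exact (HasFDerivAt.prodMk (HasFDerivAt.add hasFDerivAt_fst (h1.smul_const ω)) hasFDerivAt_snd)

lemma hasFDerivAt_Sbo {β : ℝ} {ω : Fin N → ℝ} {f : Pt N → ℝ} {z : Pt N} (hz : 0 < z.2)
    (hf : DifferentiableAt ℝ f (Tm β ω z)) :
    HasFDerivAt (Sbo β ω f)
      ((fderiv ℝ f (Tm β ω z)).comp (Lm ω ((β + 1) * z.2 ^ β))) z :=
  (hf.hasFDerivAt).comp z (hasFDerivAt_Tm β ω hz)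

lemma pd_Sbo {β : ℝ} {ω : Fin N → ℝ} {f : Pt N → ℝ} {z : Pt N} (hz : 0 < z.2)
    (hf : DifferentiableAt ℝ f (Tm β ω z)) (v : Pt N) :
    pd v (Sbo β ω f) z = fderiv ℝ f (Tm β ω z) (Lm ω ((β + 1) * z.2 ^ β) v) := by
  rw [pd, (hasFDerivAt_Sbo hz hf).fderiv]; rfl

end St13

/-- With `β = (α₁−α₂)/2`,
`ℒ(S_{β,ω} u) = S_{β,ω}(ℒ̃ u)` where `ℒ̃` has parameters
`Q̃ = Q + 2(β+1) q⊗ω + γ(β+1)² ω⊗ω`, `q̃ = q + γ(β+1)ω`,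
`d̃ = d + (c+γβ)(β+1)ω`, and the same `γ, c, b, α₁, α₂`. -/
theorem statement13 (N : ℕ) (hN : 1 ≤ N)
    (Q : Matrix (Fin N) (Fin N) ℝ) (hQ : Q.IsSymm) (q d : Fin N → ℝ)
    (γ c b α₁ α₂ : ℝ) (hα : α₂ - α₁ ≠ 2) (ω : Fin N → ℝ)
    (β : ℝ) (hβ : β = (α₁ - α₂) / 2)
    (u : Pt N → ℝ) (hu : ContDiffOn ℝ 2 u {z : Pt N | 0 < z.2}) :
    ∀ z : Pt N, 0 < z.2 →
      opL Q q d γ c b α₁ α₂ (Sbo β ω u) z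
        = Sbo β ω
            (opL
              (Matrix.of fun i j =>
                Q i j + 2 * (β + 1) * (q i * ω j) + γ * (β + 1) ^ 2 * (ω i * ω j))
              (fun i => q i + γ * (β + 1) * ω i)
              (fun i => d i + (c + γ * β) * (β + 1) * ω i)
              γ c b α₁ α₂ u) z := by
  intro z hz
  have hUo : IsOpen {p : Pt N | 0 < p.2} := isOpen_lt continuous_const continuous_snd
  have hDu : ∀ {p : Pt N}, 0 < p.2 → DifferentiableAt ℝ u p := fun {p} hp =>
    (hu.differentiableOn two_ne_zero).differentiableAt (hUo.mem_nhds hp)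
  have hwU : (0:ℝ) < (St13.Tm β ω z).2 := hz
  have hu2 : ContDiffAt ℝ 2 u (St13.Tm β ω z) := hu.contDiffAt (hUo.mem_nhds hwU)
  have hd1 : DifferentiableAt ℝ (fderiv ℝ u) (St13.Tm β ω z) :=
    (hu2.fderiv_right (m := 1) (le_refl _)).differentiableAt one_ne_zero
  set H := fderiv ℝ (fderiv ℝ u) (St13.Tm β ω z) with hHdef
  have hH : HasFDerivAt (fderiv ℝ u) H (St13.Tm β ω z) := hd1.hasFDerivAt
  have hev0 : ∀ᶠ p in nhds (St13.Tm β ω z), HasFDerivAt u (fderiv ℝ u p) p := by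
    filter_upwards [hUo.mem_nhds hwU] with p hp using (hDu hp).hasFDerivAt
  have hsymm : ∀ v₁ v₂ : Pt N, H v₁ v₂ = H v₂ v₁ := fun v₁ v₂ =>
    second_derivative_symmetric_of_eventually hev0 hH v₁ v₂
  have hfv : ∀ v : Pt N, HasFDerivAt (pd v u)
      ((ContinuousLinearMap.apply ℝ ℝ v).comp H) (St13.Tm β ω z) :=
    fun v => (ContinuousLinearMap.apply ℝ ℝ v).hasFDerivAt.comp _ hH
  have pdpd : ∀ v₁ v₂ : Pt N, pd v₁ (pd v₂ u) (St13.Tm β ω z) = H v₁ v₂ := fun v₁ v₂ => by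
    rw [pd, (hfv v₂).fderiv]; rfl
  -- eventual formulas for first derivatives of Sbo u
  have hev_x : ∀ j : Fin N, pd (ex j) (Sbo β ω u) =ᶠ[nhds z] Sbo β ω (pd (ex j) u) := by
    intro j
    filter_upwards [hUo.mem_nhds hz] with p hp
    rw [St13.pd_Sbo hp (hDu hp), St13.Lm_ex]
    rfl
  have hev_y : pd ey (Sbo β ω u) =ᶠ[nhds z]
      fun p => Sbo β ω (pd ey u) p
        + ((β + 1) * p.2 ^ β) * Sbo β ω (pd (St13.Ov ω) u) p := by
    filter_upwards [hUo.mem_nhds hz] with p hp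
    rw [St13.pd_Sbo hp (hDu hp), St13.Lm_ey, map_add, ContinuousLinearMap.map_smul]
    rfl
  -- second-derivative transfer
  have hT1 : ∀ i j : Fin N, pd (ex i) (pd (ex j) (Sbo β ω u)) z = H (ex i) (ex j) := by
    intro i j
    rw [pd, (hev_x j).fderiv_eq,
      (St13.hasFDerivAt_Sbo hz (hfv (ex j)).differentiableAt).fderiv, (hfv (ex j)).fderiv]
    simp [St13.Lm_ex]
  have hφ : HasFDerivAt (fun p : Pt N => (β + 1) * p.2 ^ β)
      ((β + 1) • ((β * z.2 ^ (β - 1)) • ContinuousLinearMap.snd ℝ (Fin N → ℝ) ℝ)) z := by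
    have h0 : HasDerivAt (fun t : ℝ => t ^ β) (β * z.2 ^ (β - 1)) z.2 :=
      Real.hasDerivAt_rpow_const (Or.inl hz.ne')
    exact (h0.comp_hasFDerivAt z hasFDerivAt_snd).const_mul (β + 1)
  have hF : HasFDerivAt
      (fun p : Pt N => Sbo β ω (pd ey u) p
        + ((β + 1) * p.2 ^ β) * Sbo β ω (pd (St13.Ov ω) u) p)
      (((fderiv ℝ (pd ey u) (St13.Tm β ω z)).comp (St13.Lm ω ((β + 1) * z.2 ^ β)))
        + (((β + 1) * z.2 ^ β) •
            ((fderiv ℝ (pd (St13.Ov ω) u) (St13.Tm β ω z)).comp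
              (St13.Lm ω ((β + 1) * z.2 ^ β)))
          + (Sbo β ω (pd (St13.Ov ω) u) z) •
              ((β + 1) • ((β * z.2 ^ (β - 1)) • ContinuousLinearMap.snd ℝ (Fin N → ℝ) ℝ)))) z :=
    (St13.hasFDerivAt_Sbo hz (hfv ey).differentiableAt).add
      (hφ.mul (St13.hasFDerivAt_Sbo hz (hfv (St13.Ov ω)).differentiableAt))
  have hSOv : Sbo β ω (pd (St13.Ov ω) u) z = ∑ i, ω i * pd (ex i) u (St13.Tm β ω z) := by
    show fderiv ℝ u (St13.Tm β ω z) (St13.Ov ω) = _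
    rw [St13.clmOv₂]
    rfl
  have hsym2 : ∀ j : Fin N, H ey (ex j) = H (ex j) ey := fun j => hsymm ey (ex j)
  have hT2 : ∀ i : Fin N, pd (ex i) (pd ey (Sbo β ω u)) z
      = H (ex i) ey + ((β + 1) * z.2 ^ β) * ∑ j, ω j * H (ex i) (ex j) := by
    intro i
    rw [pd, hev_y.fderiv_eq, hF.fderiv, (hfv ey).fderiv, (hfv (St13.Ov ω)).fderiv]
    simp [St13.Lm_ex, St13.ex_snd, St13.clmOv₂]
  have hT3 : pd ey (pd ey (Sbo β ω u)) z
      = H ey ey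
        + ((β + 1) * z.2 ^ β) * (∑ i, ω i * H (ex i) ey)
        + ((β + 1) * z.2 ^ β) * ((∑ i, ω i * H (ex i) ey)
            + ((β + 1) * z.2 ^ β) * ∑ i, ω i * ∑ j, ω j * H (ex j) (ex i))
        + (∑ i, ω i * pd (ex i) u (St13.Tm β ω z)) * ((β + 1) * (β * z.2 ^ (β - 1))) := by
    rw [pd, hev_y.fderiv_eq, hF.fderiv, (hfv ey).fderiv, (hfv (St13.Ov ω)).fderiv]
    simp [St13.Lm_ey, St13.ey_snd, hSOv, map_add, ContinuousLinearMap.map_smul, St13.clmOv₁,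
      St13.clmOv₂, hsym2]
    ring
  have hT4 : ∀ i : Fin N, pd (ex i) (Sbo β ω u) z = pd (ex i) u (St13.Tm β ω z) := by
    intro i
    rw [St13.pd_Sbo hz (hDu hwU), St13.Lm_ex]
    rfl
  have hT5 : pd ey (Sbo β ω u) z
      = pd ey u (St13.Tm β ω z)
        + ((β + 1) * z.2 ^ β) * ∑ i, ω i * pd (ex i) u (St13.Tm β ω z) := by
    rw [St13.pd_Sbo hz (hDu hwU), St13.Lm_ey, map_add, ContinuousLinearMap.map_smul,
      St13.clmOv₂]
    rfl
  -- final assembly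
  have hswap : (∑ i, ω i * ∑ j, ω j * H (ex j) (ex i))
      = ∑ i, ω i * ∑ j, ω j * H (ex i) (ex j) := by
    simp only [Finset.mul_sum]
    rw [Finset.sum_comm]
    exact Finset.sum_congr rfl fun i _ => Finset.sum_congr rfl fun j _ => by ring
  have hR1 : ∀ i j : Fin N, pd (ex i) (pd (ex j) u) (St13.Tm β ω z) = H (ex i) (ex j) :=
    fun i j => pdpd _ _
  have hR2 : ∀ i : Fin N, pd (ex i) (pd ey u) (St13.Tm β ω z) = H (ex i) ey :=
    fun i => pdpd _ _
  have hR3 : pd ey (pd ey u) (St13.Tm β ω z) = H ey ey := pdpd _ _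
  have hT6 : Sbo β ω u z = u (St13.Tm β ω z) := rfl
  have hTz2 : (St13.Tm β ω z).2 = z.2 := rfl
  have hRHS : Sbo β ω
      (opL
        (Matrix.of fun i j =>
          Q i j + 2 * (β + 1) * (q i * ω j) + γ * (β + 1) ^ 2 * (ω i * ω j))
        (fun i => q i + γ * (β + 1) * ω i)
        (fun i => d i + (c + γ * β) * (β + 1) * ω i)
        γ c b α₁ α₂ u) z
      = opL
        (Matrix.of fun i j =>
          Q i j + 2 * (β + 1) * (q i * ω j) + γ * (β + 1) ^ 2 * (ω i * ω j))
        (fun i => q i + γ * (β + 1) * ω i)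
        (fun i => d i + (c + γ * β) * (β + 1) * ω i)
        γ c b α₁ α₂ u (St13.Tm β ω z) := rfl
  rw [hRHS]
  simp only [opL, hTz2, hT6, hT1, hT2, hT3, hT4, hT5, hR1, hR2, hR3, Matrix.of_apply]
  -- sum expansions
  have hS1 : ∑ i, q i * (H (ex i) ey + ((β + 1) * z.2 ^ β) * ∑ j, ω j * H (ex i) (ex j))
      = (∑ i, q i * H (ex i) ey)
        + ((β + 1) * z.2 ^ β) * ∑ i, q i * ∑ j, ω j * H (ex i) (ex j) := by
    rw [Finset.mul_sum, ← Finset.sum_add_distrib]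
    exact Finset.sum_congr rfl fun i _ => by ring
  have hS2 : ∑ i, ∑ j, (Q i j + 2 * (β + 1) * (q i * ω j) + γ * (β + 1) ^ 2 * (ω i * ω j))
        * H (ex i) (ex j)
      = (∑ i, ∑ j, Q i j * H (ex i) (ex j))
        + 2 * (β + 1) * (∑ i, q i * ∑ j, ω j * H (ex i) (ex j))
        + γ * (β + 1) ^ 2 * (∑ i, ω i * ∑ j, ω j * H (ex i) (ex j)) := by
    simp only [Finset.mul_sum, ← Finset.sum_add_distrib]
    exact Finset.sum_congr rfl fun i _ => Finset.sum_congr rfl fun j _ => by ring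
  have hS3 : ∑ i, (q i + γ * (β + 1) * ω i) * H (ex i) ey
      = (∑ i, q i * H (ex i) ey) + γ * (β + 1) * ∑ i, ω i * H (ex i) ey := by
    rw [Finset.mul_sum, ← Finset.sum_add_distrib]
    exact Finset.sum_congr rfl fun i _ => by ring
  have hS4 : ∑ i, (d i + (c + γ * β) * (β + 1) * ω i) * pd (ex i) u (St13.Tm β ω z)
      = (∑ i, d i * pd (ex i) u (St13.Tm β ω z))
        + (c + γ * β) * (β + 1) * ∑ i, ω i * pd (ex i) u (St13.Tm β ω z) := by
    rw [Finset.mul_sum, ← Finset.sum_add_distrib]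
    exact Finset.sum_congr rfl fun i _ => by ring
  -- power identities
  have hp1 : z.2 ^ α₁ = z.2 ^ α₂ * z.2 ^ β * z.2 ^ β := by
    rw [show α₁ = α₂ + β + β by rw [hβ]; ring, Real.rpow_add hz, Real.rpow_add hz]
  have hp2 : z.2 ^ ((α₁ + α₂) / 2) = z.2 ^ α₂ * z.2 ^ β := by
    rw [show (α₁ + α₂) / 2 = α₂ + β by rw [hβ]; ring, Real.rpow_add hz]
  have hp3 : z.2 ^ ((α₁ + α₂) / 2 - 1) = z.2 ^ α₂ * z.2 ^ β * z.2 ^ (-1 : ℝ) := by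
    rw [show (α₁ + α₂) / 2 - 1 = α₂ + β + (-1) by rw [hβ]; ring, Real.rpow_add hz,
      Real.rpow_add hz]
  have hp4 : z.2 ^ (α₂ - 1) = z.2 ^ α₂ * z.2 ^ (-1 : ℝ) := by
    rw [show α₂ - 1 = α₂ + (-1) by ring, Real.rpow_add hz]
  have hp5 : z.2 ^ (β - 1) = z.2 ^ β * z.2 ^ (-1 : ℝ) := by
    rw [show β - 1 = β + (-1) by ring, Real.rpow_add hz]
  simp only [hS1, hS2, hS3, hS4, hswap, hp1, hp2, hp3, hp4, hp5]
  ring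
end
end

section
/- Let N ≥ 1, c ∈ ℝ with c ≠ 0, d ∈ ℝ^N, and α₁, α₂ ∈ ℝ with α₂ − α₁ ≠ 2. Set β := (α₁−α₂)/2 and ω := −d/(c(β+1)). Then for every u ∈ C²(ℝ^{N+1}_+) and every (x,y) ∈ ℝ^{N+1}_+, one has y^{(α₁+α₂)/2−1} d·∇_x(S_{β,ω}u)(x,y) + c y^{α₂−1} ∂_y(S_{β,ω}u)(x,y) = S_{β,ω}( c y^{α₂−1} ∂_y u )(x,y). -/
open MeasureTheory Real

noncomputable section

/-- With `β = (α₁−α₂)/2` and `ω = −d/(c(β+1))`, the oblique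
derivative transforms under `S_{β,ω}` into a pure Neumann derivative:
`y^{(α₁+α₂)/2−1} d·∇_x(S_{β,ω}u) + c y^{α₂−1} ∂_y(S_{β,ω}u) = S_{β,ω}(c y^{α₂−1} ∂_y u)`. -/
theorem statement15 (N : ℕ) (hN : 1 ≤ N) (c : ℝ) (hc : c ≠ 0) (d : Fin N → ℝ)
    (α₁ α₂ : ℝ) (hα : α₂ - α₁ ≠ 2)
    (β : ℝ) (hβ : β = (α₁ - α₂) / 2) (ω : Fin N → ℝ)
    (hω : ω = fun i => -d i / (c * (β + 1)))
    (u : Pt N → ℝ) (hu : ContDiffOn ℝ 2 u {z : Pt N | 0 < z.2}) :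
    ∀ z : Pt N, 0 < z.2 →
      z.2 ^ ((α₁ + α₂) / 2 - 1) * (∑ i, d i * pd (ex i) (Sbo β ω u) z)
          + c * z.2 ^ (α₂ - 1) * pd ey (Sbo β ω u) z
        = Sbo β ω (fun w => c * w.2 ^ (α₂ - 1) * pd ey u w) z := by
  intro z hz
  have hy : (0:ℝ) < z.2 := hz
  have hβ1 : β + 1 ≠ 0 := by
    rw [hβ]; intro h; apply hα; linarith
  set w : Pt N := (z.1 + z.2 ^ (β + 1) • ω, z.2) with hw
  have hwmem : w ∈ {z : Pt N | 0 < z.2} := hz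
  have hud : DifferentiableAt ℝ u w := by
    have h1 : ContDiffAt ℝ 2 u w :=
      hu.contDiffAt ((isOpen_lt continuous_const continuous_snd).mem_nhds hwmem)
    exact h1.differentiableAt (by norm_num)
  set Du := fderiv ℝ u w with hDu
  -- derivative of the power map
  have hpow : HasFDerivAt (fun p : Pt N => p.2 ^ (β + 1))
      (((β + 1) * z.2 ^ β) • ContinuousLinearMap.snd ℝ (Fin N → ℝ) ℝ) z := by
    have h1 : HasDerivAt (fun t : ℝ => t ^ (β + 1)) ((β + 1) * z.2 ^ β) z.2 := by
      have h2 := Real.hasDerivAt_rpow_const (x := z.2) (p := β + 1) (Or.inl hy.ne')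
      have h3 : β + 1 - 1 = β := by ring
      rwa [h3] at h2
    exact h1.comp_hasFDerivAt z hasFDerivAt_snd
  set L : Pt N →L[ℝ] Pt N :=
    ((ContinuousLinearMap.fst ℝ (Fin N → ℝ) ℝ) +
      ((((β + 1) * z.2 ^ β) • ContinuousLinearMap.snd ℝ (Fin N → ℝ) ℝ).smulRight ω)).prod
      (ContinuousLinearMap.snd ℝ (Fin N → ℝ) ℝ) with hL
  have hg : HasFDerivAt (fun p : Pt N => (p.1 + p.2 ^ (β + 1) • ω, p.2)) L z :=
    (hasFDerivAt_fst.add (hpow.smul_const ω)).prodMk hasFDerivAt_snd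
  have hS : HasFDerivAt (Sbo β ω u) (Du.comp L) z := hud.hasFDerivAt.comp z hg
  have hfd : fderiv ℝ (Sbo β ω u) z = Du.comp L := hS.fderiv
  -- compute directional derivatives
  have hLex : ∀ i, L (ex i) = ((Pi.single i 1 : Fin N → ℝ), (0:ℝ)) := by
    intro i
    simp [hL, ex, ContinuousLinearMap.prod_apply]
  have hLey : L ey = ((((β + 1) * z.2 ^ β) • ω : Fin N → ℝ), (1:ℝ)) := by
    simp [hL, ey, ContinuousLinearMap.prod_apply]
  have hpdx : ∀ i, pd (ex i) (Sbo β ω u) z = Du ((Pi.single i 1 : Fin N → ℝ), (0:ℝ)) := by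
    intro i
    simp [pd, hfd, ContinuousLinearMap.comp_apply, hLex i]
  have hpdy : pd ey (Sbo β ω u) z
      = Du ((((β + 1) * z.2 ^ β) • ω : Fin N → ℝ), (1:ℝ)) := by
    simp [pd, hfd, ContinuousLinearMap.comp_apply, hLey]
  -- the x-direction sum
  have hvec : (∑ i, d i • (((Pi.single i 1 : Fin N → ℝ), (0:ℝ)) : Pt N)) = ((d, 0) : Pt N) := by
    refine Prod.ext ?_ ?_
    · rw [Prod.fst_sum]
      funext j
      simp [Finset.sum_apply, Pi.single_apply, mul_ite, Finset.sum_ite_eq]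
    · rw [Prod.snd_sum]; simp
  have hsum : (∑ i, d i * Du ((Pi.single i 1 : Fin N → ℝ), (0:ℝ)))
      = Du ((d, 0) : Pt N) := by
    rw [← hvec, map_sum]
    congr 1; funext i
    rw [Du.map_smul, smul_eq_mul]
  -- decompose Du at L ey
  have homega : ((ω, (0:ℝ)) : Pt N) = (-(c * (β + 1))⁻¹) • ((d, 0) : Pt N) := by
    refine Prod.ext ?_ ?_
    · funext j; simp [hω]; field_simp
    · simp
  have hdec : Du ((((β + 1) * z.2 ^ β) • ω : Fin N → ℝ), (1:ℝ))
      = ((β + 1) * z.2 ^ β) * ((-(c * (β + 1))⁻¹) * Du ((d, 0) : Pt N))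
        + Du (((0 : Fin N → ℝ), (1:ℝ)) : Pt N) := by
    have h1 : ((((β + 1) * z.2 ^ β) • ω : Fin N → ℝ), (1:ℝ))
        = ((β + 1) * z.2 ^ β) • ((ω, (0:ℝ)) : Pt N) + (((0 : Fin N → ℝ), (1:ℝ)) : Pt N) := by
      refine Prod.ext ?_ ?_ <;> simp
    rw [h1, map_add, Du.map_smul, homega, Du.map_smul]
    simp [smul_eq_mul]
  -- RHS
  have hrhs : Sbo β ω (fun w => c * w.2 ^ (α₂ - 1) * pd ey u w) z
      = c * z.2 ^ (α₂ - 1) * Du (((0 : Fin N → ℝ), (1:ℝ)) : Pt N) := by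
    simp only [Sbo]
    rfl
  rw [hrhs, hpdy, hdec]
  simp only [hpdx]
  rw [hsum]
  -- final algebra
  have hexp : z.2 ^ ((α₁ + α₂) / 2 - 1) = z.2 ^ (α₂ - 1) * z.2 ^ β := by
    rw [← Real.rpow_add hy]
    congr 1
    rw [hβ]; ring
  rw [hexp]
  field_simp
  ring
end
end
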